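/- arXiv:1509.05274 — 6 statements merged into one kernel-verified Lean document; each statement's English description precedes it below -/
import Mathlib

section
/- Let X be a compound Poisson process. Then there exists an event A with P(A) = 1 such that for every ω ∈ Ω_X ∩ A, the sample path t ↦ X_t(ω) is slowly growing. -/
open MeasureTheory ProbabilityTheory Filter

noncomputable section

/-- The path of the compound Poisson process `X_t = Σ_{i=1}^{N_t} Y_i`, where
`N_t = #{n ≥ 1 : T_1 + ⋯ + T_n ≤ t}` is the number of jump times up to time `t`. -/
def cppPath {Ω : Type*} (Y T : ℕ → Ω → ℝ) (t : ℝ) (ω : Ω) : ℝ :=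
  ∑ i ∈ Finset.range (Set.ncard {n : ℕ | ∑ j ∈ Finset.range (n + 1), T j ω ≤ t}), Y i ω

/-- The data of a compound Poisson process with rate `lam`: jump heights `(Y_i)` i.i.d.,
inter-arrival times `(T_i)` i.i.d. exponential with parameter `lam`, and the whole family
`(Y_i)_i ∪ (T_i)_i` mutually independent. -/
structure IsCompoundPoisson {Ω : Type*} [MeasurableSpace Ω] (P : Measure Ω)
    (lam : ℝ) (Y T : ℕ → Ω → ℝ) : Prop where
  lam_pos : 0 < lam
  measurableY : ∀ i, Measurable (Y i)
  measurableT : ∀ i, Measurable (T i)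
  indep : iIndepFun (Sum.elim Y T : ℕ ⊕ ℕ → Ω → ℝ) P
  idY : ∀ i, Measure.map (Y i) P = Measure.map (Y 0) P
  expT : ∀ (i : ℕ) (x : ℝ), P {ω | T i ω ≤ x} = ENNReal.ofReal (1 - Real.exp (-(lam * x)))

/-- The Schwartz-space norm `N_p(φ) = Σ_{k,n ≤ p} sup_x ‖x‖^k ‖φ^{(n)}(x)‖`. -/
def schwartzNorm {E : Type*} [NormedAddCommGroup E] [NormedSpace ℝ E] (p : ℕ)
    (φ : SchwartzMap E ℝ) : ℝ :=
  ∑ k ∈ Finset.range (p + 1), ∑ n ∈ Finset.range (p + 1), SchwartzMap.seminorm ℝ k n φ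

/-- The sample path `t ↦ L t ω` defines a tempered distribution via
`φ ↦ ∫_{ℝ₊} L t ω φ(t) dt`. -/
def PathTempered {Ω : Type*} [MeasurableSpace Ω] (L : ℝ → Ω → ℝ) (ω : Ω) : Prop :=
  ∃ (p : ℕ) (C : ℝ), ∀ φ : SchwartzMap ℝ ℝ,
    |∫ t in Set.Ici (0 : ℝ), L t ω * φ t| ≤ C * schwartzNorm p φ

/-- A function on `ℝ₊` is slowly growing if it is bounded by `C (1+|t|)^α` for some `α ≥ 0`. -/
def SlowlyGrowing (f : ℝ → ℝ) : Prop :=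
  ∃ α C : ℝ, 0 ≤ α ∧ ∀ t : ℝ, 0 ≤ t → |f t| ≤ C * (1 + |t|) ^ α

open Set Metric Topology
open scoped ENNReal

namespace CPPAux
open scoped ContDiff


/-- fixed bump function on ℝ: equal to 1 on [-1,1], supported in (-2,2). -/
def psi : ContDiffBump (0:ℝ) := ⟨1, 2, one_pos, one_lt_two⟩

lemma psi_zero {x : ℝ} (hx : 2 < |x|) : psi x = 0 := by
  apply psi.zero_of_le_dist
  simpa [psi, Real.dist_eq] using hx.le

lemma psi_one {x : ℝ} (hx : |x| ≤ 1) : psi x = 1 := by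
  apply psi.one_of_mem_closedBall
  simpa [psi, Real.dist_eq] using hx

lemma exists_B (n : ℕ) : ∃ B : ℝ, ∀ x, ‖iteratedDeriv n (psi : ℝ → ℝ) x‖ ≤ B := by
  have h1 : Continuous (iteratedFDeriv ℝ n (psi : ℝ → ℝ)) :=
    (psi.contDiff (n := (⊤:ℕ∞))).continuous_iteratedFDeriv (mod_cast le_top)
  have h2 : HasCompactSupport (iteratedFDeriv ℝ n (psi : ℝ → ℝ)) :=
    psi.hasCompactSupport.iteratedFDeriv n
  obtain ⟨B, hB⟩ := h2.exists_bound_of_continuous h1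
  exact ⟨B, fun x => by
    rw [← norm_iteratedFDeriv_eq_norm_iteratedDeriv]; exact hB x⟩

/-- the scaled translated bump -/
def bfun (c δ : ℝ) : ℝ → ℝ := fun x => psi (δ⁻¹ * x + -(c/δ))

lemma bfun_apply {c δ : ℝ} (hδ : 0 < δ) (x : ℝ) : bfun c δ x = psi ((x - c)/δ) := by
  unfold bfun
  congr 1
  field_simp
  ring

lemma bfun_smooth (c δ : ℝ) : ContDiff ℝ ∞ (bfun c δ) :=
  (psi.contDiff (n := (⊤:ℕ∞))).comp (((contDiff_const.mul contDiff_id).add contDiff_const))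

lemma bfun_zero_of_not_mem {c δ : ℝ} (hδ : 0 < δ) {x : ℝ}
    (hx : x ∉ Icc (c - 2*δ) (c + 2*δ)) : bfun c δ x = 0 := by
  rw [bfun_apply hδ]
  apply psi_zero
  rw [abs_div, abs_of_pos hδ, lt_div_iff₀ hδ]
  rcases not_and_or.mp ((Set.mem_Icc).not.mp hx) with h | h
  · push_neg at h
    rw [abs_of_neg (by linarith)]
    linarith
  · push_neg at h
    rw [abs_of_pos (by linarith)]
    linarith

lemma bfun_one_of_mem {c δ : ℝ} (hδ : 0 < δ) {x : ℝ}
    (hx : x ∈ Icc (c - δ) (c + δ)) : bfun c δ x = 1 := by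
  rw [bfun_apply hδ]
  apply psi_one
  rw [abs_div, abs_of_pos hδ, div_le_one hδ, abs_le]
  exact ⟨by linarith [hx.1], by linarith [hx.2]⟩

lemma bfun_nonneg (c δ : ℝ) (x : ℝ) : 0 ≤ bfun c δ x := psi.nonneg

lemma bfun_compactSupport {c δ : ℝ} (hδ : 0 < δ) : HasCompactSupport (bfun c δ) := by
  apply HasCompactSupport.intro (isCompact_Icc (a := c - 2*δ) (b := c + 2*δ))
  exact fun x hx => bfun_zero_of_not_mem hδ hx

lemma bfun_iteratedDeriv {c δ : ℝ} (hδ : 0 < δ) (n : ℕ) (x : ℝ) :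
    iteratedDeriv n (bfun c δ) x = (δ⁻¹)^n • iteratedDeriv n (psi : ℝ → ℝ) (δ⁻¹ * x + -(c/δ)) := by
  have h1 : ContDiff ℝ n (fun y : ℝ => psi (y + -(c/δ))) :=
    (psi.contDiff (n := (n:ℕ∞))).comp (contDiff_id.add contDiff_const)
  have h2 : bfun c δ = fun x => (fun y : ℝ => psi (y + -(c/δ))) (δ⁻¹ * x) := rfl
  rw [h2, iteratedDeriv_comp_const_smul h1 δ⁻¹]
  rw [iteratedDeriv_comp_add_const (n := n) (f := (psi : ℝ → ℝ)) (s := -(c/δ))]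

/-- The bump as a Schwartz map. -/
def bump (c δ : ℝ) (hδ : 0 < δ) : SchwartzMap ℝ ℝ where
  toFun := bfun c δ
  smooth' := bfun_smooth c δ
  decay' := by
    intro k n
    have h1 : Continuous (fun x : ℝ => ‖x‖ ^ k * ‖iteratedFDeriv ℝ n (bfun c δ) x‖) := by
      apply Continuous.mul (by fun_prop)
      exact (((bfun_smooth c δ).continuous_iteratedFDeriv (mod_cast le_top))).norm
    have h2 : HasCompactSupport (fun x : ℝ => ‖x‖ ^ k * ‖iteratedFDeriv ℝ n (bfun c δ) x‖) := by
      apply HasCompactSupport.mul_left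
      exact ((bfun_compactSupport hδ).iteratedFDeriv n).norm
    obtain ⟨B, hB⟩ := h2.exists_bound_of_continuous h1
    refine ⟨B, fun x => ?_⟩
    have := hB x
    rwa [Real.norm_eq_abs, abs_of_nonneg (by positivity)] at this

lemma bump_coe (c δ : ℝ) (hδ : 0 < δ) : ⇑(bump c δ hδ) = bfun c δ := rfl


lemma psi_tsupport : tsupport (psi : ℝ → ℝ) = closedBall 0 2 := psi.tsupport_eq

lemma iteratedDeriv_psi_zero
 {y : ℝ} (hy : 2 < |y|) (n : ℕ) :
    iteratedDeriv n (psi : ℝ → ℝ) y = 0 := by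
  have h0 : iteratedFDeriv ℝ n (psi : ℝ → ℝ) y = 0 := by
    by_contra h
    have hmem : y ∈ Function.support (iteratedFDeriv ℝ n (psi : ℝ → ℝ)) := h
    have := support_iteratedFDeriv_subset (𝕜 := ℝ) (f := (psi : ℝ → ℝ)) n hmem
    rw [psi_tsupport, mem_closedBall, Real.dist_eq, sub_zero] at this
    linarith [hy]
  rw [iteratedDeriv_eq_iteratedFDeriv, h0]
  rfl

lemma seminorm_bump_le (p k n : ℕ) (hk : k ≤ p) (hn : n ≤ p) {c δ : ℝ} (hδ : 0 < δ)
    (hc : 0 ≤ c - 2*δ) {R D B : ℝ} (hR1 : 1 ≤ R) (hRc : c + 2*δ ≤ R)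
    (hD1 : 1 ≤ D) (hDδ : δ⁻¹ ≤ D)
    (hB : ∀ x, ‖iteratedDeriv n (psi : ℝ → ℝ) x‖ ≤ B) :
    SchwartzMap.seminorm ℝ k n (bump c δ hδ) ≤ R^p * D^p * B := by
  have hB0 : 0 ≤ B := le_trans (norm_nonneg _) (hB 0)
  have hM0 : (0:ℝ) ≤ R^p * D^p * B := by positivity
  apply SchwartzMap.seminorm_le_bound' ℝ k n _ hM0
  intro x
  rw [bump_coe]
  by_cases hx : x ∈ Icc (c - 2*δ) (c + 2*δ)
  · have hxabs : |x| ≤ R := by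
      rw [abs_of_nonneg (by linarith [hx.1])]
      linarith [hx.2]
    have h1 : |x|^k ≤ R^p :=
      le_trans (pow_le_pow_left₀ (abs_nonneg x) hxabs k)
        (pow_le_pow_right₀ (by linarith) hk)
    have h2 : ‖iteratedDeriv n (bfun c δ) x‖ ≤ D^p * B := by
      rw [bfun_iteratedDeriv hδ n x, norm_smul]
      have hd1 : ‖(δ⁻¹)^n‖ ≤ D^p := by
        rw [norm_pow, Real.norm_eq_abs, abs_of_pos (by positivity)]
        exact le_trans (pow_le_pow_left₀ (by positivity) hDδ n)
          (pow_le_pow_right₀ (by linarith) hn)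
      exact mul_le_mul hd1 (hB _) (norm_nonneg _) (by positivity)
    have h3 : |x|^k * ‖iteratedDeriv n (bfun c δ) x‖ ≤ R^p * (D^p * B) :=
      mul_le_mul h1 h2 (norm_nonneg _) (by positivity)
    linarith [h3]
  · have harg : 2 < |δ⁻¹ * x + -(c/δ)| := by
      have : δ⁻¹ * x + -(c/δ) = (x - c)/δ := by field_simp; ring
      rw [this, abs_div, abs_of_pos hδ, lt_div_iff₀ hδ]
      rcases not_and_or.mp ((Set.mem_Icc).not.mp hx) with h | h
      · push_neg at h
        rw [abs_of_neg (by linarith)]; linarith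
      · push_neg at h
        rw [abs_of_pos (by linarith)]; linarith
    rw [bfun_iteratedDeriv hδ n x, iteratedDeriv_psi_zero harg, smul_zero]
    simpa using hM0

lemma bfun_integrable {c δ : ℝ} (hδ : 0 < δ) : Integrable (bfun c δ) :=
  ((bfun_smooth c δ).continuous).integrable_of_hasCompactSupport (bfun_compactSupport hδ)

lemma integral_bump_ge {c δ : ℝ} (hδ : 0 < δ) (hc : 0 ≤ c - 2*δ) :
    2*δ ≤ ∫ t in Ici (0:ℝ), bfun c δ t := by
  have hint : IntegrableOn (bfun c δ) (Ici (0:ℝ)) := (bfun_integrable hδ).integrableOn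
  have h1 : ∫ t in Icc (c-δ) (c+δ), bfun c δ t ≤ ∫ t in Ici (0:ℝ), bfun c δ t := by
    apply setIntegral_mono_set hint
    · exact Eventually.of_forall fun x => bfun_nonneg c δ x
    · apply HasSubset.Subset.eventuallyLE
      intro x hx
      have : 0 ≤ c - δ := by linarith
      exact le_trans this hx.1
  have h2 : ∫ t in Icc (c-δ) (c+δ), bfun c δ t = 2*δ := by
    rw [setIntegral_congr_fun measurableSet_Icc (g := fun _ => (1:ℝ))
      (fun x hx => bfun_one_of_mem hδ hx)]
    simp [Real.volume_Icc]
    rw [max_eq_left (by linarith)]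
    ring
  linarith

/-- The deterministic core: a piecewise-constant path with well-separated jumps whose
integral against Schwartz functions is controlled is slowly growing. -/
theorem det (Yv Tv : ℕ → ℝ) (L : ℝ → ℝ)
    (hL : ∀ t, L t = ∑ i ∈ Finset.range
      (Set.ncard {n : ℕ | ∑ j ∈ Finset.range (n+1), Tv j ≤ t}), Yv i)
    (hpos : ∀ k, 0 < Tv k)
    (K₁ : ℕ) (hlb : ∀ n, K₁ ≤ n → ((n:ℝ)+1)⁻¹^2 < Tv n)
    (m : ℝ) (hm : 0 < m) (K₂ : ℕ)
    (hgrow : ∀ n, K₂ ≤ n → m/2 * n ≤ (∑ j ∈ Finset.range n, Tv j) ∧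
      (∑ j ∈ Finset.range n, Tv j) ≤ 2*m*n)
    (p : ℕ) (C : ℝ) (hC0 : 0 ≤ C)
    (hC : ∀ φ : SchwartzMap ℝ ℝ, |∫ t in Ici (0:ℝ), L t * φ t| ≤ C * schwartzNorm p φ) :
    SlowlyGrowing L := by
  classical
  -- partial sums
  let S : ℕ → ℝ := fun n => ∑ j ∈ Finset.range n, Tv j
  have hSsucc : ∀ n, S (n+1) = S n + Tv n := fun n => Finset.sum_range_succ _ _
  have hSmono : StrictMono S := strictMono_nat_of_lt_succ fun n => by
    rw [hSsucc]; linarith [hpos n]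
  have hS0 : ∀ n, 0 ≤ S n := fun n => Finset.sum_nonneg fun j _ => (hpos j).le
  -- the path eventually exceeds any time
  have htop : ∀ t : ℝ, ∃ n, t < S (n+1) := by
    intro t
    obtain ⟨n, hn⟩ := exists_nat_gt (max (K₂:ℝ) (2/m * t))
    refine ⟨n, ?_⟩
    have hK : K₂ ≤ n + 1 := by
      have : (K₂:ℝ) < n := lt_of_le_of_lt (le_max_left _ _) hn
      have := Nat.cast_lt.mp (lt_of_lt_of_le this (by exact_mod_cast Nat.le_succ n))
      omega
    have h1 := (hgrow (n+1) hK).1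
    have h2 : 2/m * t < (n:ℝ) := lt_of_le_of_lt (le_max_right _ _) hn
    have h3 : t < m/2 * ((n:ℝ)+1) := by
      have heq : m/2 * (2/m*t) = t := by field_simp
      have hlt : m/2 * (2/m*t) < m/2 * (n:ℝ) :=
        mul_lt_mul_of_pos_left h2 (by positivity)
      nlinarith
    calc t < m/2 * ((n:ℝ)+1) := h3
      _ ≤ S (n+1) := by exact_mod_cast h1
  -- the jump count
  let Mt : ℝ → ℕ := fun t => Nat.find (htop t)
  have hMt_spec : ∀ t, t < S (Mt t + 1) := fun t => Nat.find_spec (htop t)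
  have hMt_min : ∀ t n, n < Mt t → S (n+1) ≤ t := fun t n hn => by
    have := Nat.find_min (htop t) hn
    push_neg at this
    exact this
  have key1 : ∀ t, {n : ℕ | S (n+1) ≤ t} = ↑(Finset.range (Mt t)) := by
    intro t
    ext n
    simp only [Set.mem_setOf_eq, Finset.coe_range, Set.mem_Iio]
    constructor
    · intro h
      by_contra hc
      push_neg at hc
      have : S (Mt t + 1) ≤ S (n+1) := hSmono.monotone (by omega)
      exact absurd (hMt_spec t) (not_lt.mpr (this.trans h))
    · exact hMt_min t n
  let v : ℕ → ℝ := fun n => ∑ i ∈ Finset.range n, Yv i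
  have key2 : ∀ t, L t = v (Mt t) := by
    intro t
    rw [hL t]
    have : {n : ℕ | ∑ j ∈ Finset.range (n+1), Tv j ≤ t} = {n : ℕ | S (n+1) ≤ t} := rfl
    rw [this, key1, Set.ncard_coe_finset, Finset.card_range]
  have key3 : ∀ t n, S n ≤ t → t < S (n+1) → Mt t = n := by
    intro t n h1 h2
    refine le_antisymm (Nat.find_le h2) ?_
    by_contra hc
    push_neg at hc
    have hle : S (Mt t + 1) ≤ S n := hSmono.monotone (by omega)
    linarith [hMt_spec t]

  have key4 : ∀ t, 0 ≤ t → S (Mt t) ≤ t := by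
    intro t ht
    rcases Nat.eq_zero_or_pos (Mt t) with h | h
    · rw [h]; simpa [S] using ht
    · have h1 : Mt t - 1 < Mt t := Nat.sub_lt h one_pos
      have h2 := hMt_min t (Mt t - 1) h1
      have h3 : Mt t - 1 + 1 = Mt t := Nat.succ_pred_eq_of_pos h
      rwa [h3] at h2
  choose Bf hBf using exists_B
  set Bsum : ℝ := (∑ j ∈ Finset.range (p+1), |Bf j|) + 1 with hBsum_def
  have hBsumS : 0 ≤ ∑ j ∈ Finset.range (p+1), |Bf j| :=
    Finset.sum_nonneg fun j _ => abs_nonneg _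
  have hBsum1 : 1 ≤ Bsum := by rw [hBsum_def]; linarith
  have hBsum0 : 0 ≤ Bsum := by linarith
  have hBsum : ∀ n, n ≤ p → ∀ x, ‖iteratedDeriv n (psi : ℝ → ℝ) x‖ ≤ Bsum := by
    intro n hn x
    have h1 : Bf n ≤ ∑ j ∈ Finset.range (p+1), |Bf j| :=
      le_trans (le_abs_self _) (Finset.single_le_sum (fun j _ => abs_nonneg (Bf j))
        (Finset.mem_range.mpr (by omega)))
    exact le_trans (hBf n x) (by linarith)
  set c₂ : ℝ := max 1 (2*m) with hc₂_def
  have hc₂1 : 1 ≤ c₂ := le_max_left _ _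
  set N₀ : ℕ := max (max K₁ K₂) 1 with hN₀_def
  set C₁ : ℝ := C * ((p:ℝ)+1)^2 * Bsum * c₂^p * 8^p * 4 with hC₁_def
  have hC₁0 : 0 ≤ C₁ := by
    rw [hC₁_def]
    refine mul_nonneg (mul_nonneg (mul_nonneg (mul_nonneg
      (mul_nonneg hC0 (by positivity)) hBsum0) (by positivity)) (by positivity)) (by norm_num)
  -- the key quantitative estimate on the jump values
  have hv : ∀ n, N₀ ≤ n → |v n| ≤ C₁ * ((n:ℝ)+1)^(3*p+2) := by
    intro n hn
    have hK₁n : K₁ ≤ n := le_trans (le_trans (le_max_left _ _) (le_max_left _ _)) hn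
    have hK₂n : K₂ ≤ n := le_trans (le_trans (le_max_right _ _) (le_max_left _ _)) hn
    have hTv := hpos n
    have hTlb := hlb n hK₁n
    have hn1 : (0:ℝ) < (n:ℝ)+1 := by positivity
    set δ : ℝ := Tv n / 8 with hδ_def
    have hδ : 0 < δ := by rw [hδ_def]; positivity
    set c : ℝ := S n + Tv n / 2 with hc_def
    have hc : 0 ≤ c - 2*δ := by
      rw [hc_def, hδ_def]; have := hS0 n; linarith
    set R : ℝ := c₂ * ((n:ℝ)+1) with hR_def
    have hR1 : 1 ≤ R := by
      rw [hR_def]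
      calc (1:ℝ) = 1*1 := by ring
        _ ≤ c₂ * ((n:ℝ)+1) :=
          mul_le_mul hc₂1 (by linarith) (by norm_num) (by linarith)
    have hSn1 : S (n+1) ≤ 2*m*((n:ℝ)+1) := by
      have h := (hgrow (n+1) (by omega)).2
      have : ((n+1:ℕ):ℝ) = (n:ℝ)+1 := by push_cast; ring
      rw [this] at h
      exact h
    have hRc : c + 2*δ ≤ R := by
      have h2 : S n + 3/4*Tv n ≤ S (n+1) := by rw [hSsucc]; linarith
      have h3 : 2*m*((n:ℝ)+1) ≤ c₂*((n:ℝ)+1) :=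
        mul_le_mul_of_nonneg_right (le_max_right _ _) (by linarith)
      rw [hc_def, hδ_def, hR_def]; linarith
    set D : ℝ := 8 * ((n:ℝ)+1)^2 with hD_def
    have hD1 : 1 ≤ D := by rw [hD_def]; nlinarith
    have hinvsq : ((n:ℝ)+1)⁻¹^2 * ((n:ℝ)+1)^2 = 1 := by
      field_simp
    have hDδ : δ⁻¹ ≤ D := by
      rw [hδ_def, hD_def, inv_div]
      rw [div_le_iff₀ hTv]
      have hkey : ((n:ℝ)+1)⁻¹^2 * (8*((n:ℝ)+1)^2) = 8 := by field_simp
      have h6 := mul_le_mul_of_nonneg_right hTlb.le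
        (by positivity : (0:ℝ) ≤ 8*((n:ℝ)+1)^2)
      rw [hkey] at h6
      linarith
    have hsem : schwartzNorm p (bump c δ hδ) ≤ ((p:ℝ)+1)^2 * (R^p * D^p * Bsum) := by
      unfold schwartzNorm
      calc ∑ k ∈ Finset.range (p + 1), ∑ j ∈ Finset.range (p + 1),
            SchwartzMap.seminorm ℝ k j (bump c δ hδ)
          ≤ ∑ _k ∈ Finset.range (p + 1), ∑ _j ∈ Finset.range (p + 1),
            (R^p * D^p * Bsum) := by
            refine Finset.sum_le_sum fun k hk => Finset.sum_le_sum fun j hj => ?_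
            exact seminorm_bump_le p k j (Nat.lt_succ_iff.mp (Finset.mem_range.mp hk))
              (Nat.lt_succ_iff.mp (Finset.mem_range.mp hj)) hδ hc hR1 hRc hD1 hDδ
              (hBsum j (Nat.lt_succ_iff.mp (Finset.mem_range.mp hj)))
        _ = ((p:ℝ)+1)^2 * (R^p * D^p * Bsum) := by
            simp [Finset.sum_const, Finset.card_range]
            push_cast
            ring
    have hSn_lt : S n < S (n+1) := hSmono (by omega)
    have ha : ∀ t ∈ Ici (0:ℝ), L t * (bump c δ hδ) t = v n * (bump c δ hδ) t := by
      intro t _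
      have hcoe : (bump c δ hδ) t = bfun c δ t := by rw [bump_coe]
      rw [hcoe]
      by_cases hφ : bfun c δ t = 0
      · rw [hφ]; ring
      · have htmem : t ∈ Icc (c - 2*δ) (c + 2*δ) := by
          by_contra hmem; exact hφ (bfun_zero_of_not_mem hδ hmem)
        have hm1 := htmem.1
        have hm2 := htmem.2
        rw [hc_def, hδ_def] at hm1 hm2
        have h1 : S n ≤ t := by linarith
        have h2 : t < S (n+1) := by rw [hSsucc]; linarith
        rw [key2 t, key3 t n h1 h2]
    have hIeq : ∫ t in Ici (0:ℝ), L t * (bump c δ hδ) t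
        = v n * ∫ t in Ici (0:ℝ), bfun c δ t := by
      rw [setIntegral_congr_fun measurableSet_Ici ha]
      have : ∀ t, v n * (bump c δ hδ) t = v n * bfun c δ t := by
        intro t; rw [bump_coe]
      simp_rw [this]
      exact integral_const_mul _ _
    have hint := integral_bump_ge hδ hc
    have habs : |v n| * (2*δ) ≤ C * (((p:ℝ)+1)^2 * (R^p * D^p * Bsum)) := by
      have h1 : |v n| * (2*δ) ≤ |v n| * ∫ t in Ici (0:ℝ), bfun c δ t :=
        mul_le_mul_of_nonneg_left hint (abs_nonneg _)
      have h2 : |v n| * ∫ t in Ici (0:ℝ), bfun c δ t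
          = |v n * ∫ t in Ici (0:ℝ), bfun c δ t| := by
        rw [abs_mul, abs_of_nonneg (le_trans (by positivity) hint)]
      have h3 := hC (bump c δ hδ)
      rw [hIeq] at h3
      have h4 : C * schwartzNorm p (bump c δ hδ)
          ≤ C * (((p:ℝ)+1)^2 * (R^p * D^p * Bsum)) :=
        mul_le_mul_of_nonneg_left hsem hC0
      linarith
    have h2δinv : (2*δ)⁻¹ ≤ 4*((n:ℝ)+1)^2 := by
      have h7 : 2*δ = Tv n/4 := by rw [hδ_def]; ring
      rw [h7, inv_div, div_le_iff₀ hTv]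
      have hkey : ((n:ℝ)+1)⁻¹^2 * (4*((n:ℝ)+1)^2) = 4 := by field_simp
      have h6 := mul_le_mul_of_nonneg_right hTlb.le
        (by positivity : (0:ℝ) ≤ 4*((n:ℝ)+1)^2)
      rw [hkey] at h6
      linarith
    have hRHS0 : 0 ≤ C * (((p:ℝ)+1)^2 * (R^p * D^p * Bsum)) := by
      refine mul_nonneg hC0 (mul_nonneg (by positivity) ?_)
      refine mul_nonneg (mul_nonneg (by positivity) (by positivity)) hBsum0
    have h2δ : (0:ℝ) < 2*δ := by linarith
    have hfinal : |v n| ≤ C * (((p:ℝ)+1)^2 * (R^p * D^p * Bsum)) * (4*((n:ℝ)+1)^2) := by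
      calc |v n| = |v n| * (2*δ) * (2*δ)⁻¹ := by field_simp
        _ ≤ C * (((p:ℝ)+1)^2 * (R^p * D^p * Bsum)) * (2*δ)⁻¹ :=
          mul_le_mul_of_nonneg_right habs (by positivity)
        _ ≤ C * (((p:ℝ)+1)^2 * (R^p * D^p * Bsum)) * (4*((n:ℝ)+1)^2) :=
          mul_le_mul_of_nonneg_left h2δinv hRHS0
    calc |v n| ≤ C * (((p:ℝ)+1)^2 * (R^p * D^p * Bsum)) * (4*((n:ℝ)+1)^2) := hfinal
      _ = C₁ * ((n:ℝ)+1)^(3*p+2) := by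
        rw [hR_def, hD_def, hC₁_def, mul_pow, mul_pow, ← pow_mul]
        rw [show 3*p+2 = p + (2*p + 2) from by omega, pow_add, pow_add]
        ring
  -- conclusion
  set C₀ : ℝ := ∑ j ∈ Finset.range N₀, |v j| with hC₀_def
  have hC₀0 : 0 ≤ C₀ := Finset.sum_nonneg fun j _ => abs_nonneg _
  set c₃ : ℝ := max (2/m) 1 with hc₃_def
  have hc₃0 : 0 ≤ c₃ := le_trans zero_le_one (le_max_right _ _)
  have hCc₃ : 0 ≤ C₁ * c₃^(3*p+2) := mul_nonneg hC₁0 (pow_nonneg hc₃0 _)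
  refine ⟨((3*p+2 : ℕ) : ℝ), C₁ * c₃^(3*p+2) + C₀, by positivity, ?_⟩
  intro t ht
  have hpow : (1 + |t|) ^ ((3*p+2 : ℕ) : ℝ) = (1+t)^(3*p+2) := by
    rw [abs_of_nonneg ht, Real.rpow_natCast]
  rw [hpow, key2 t]
  have h1t : (1:ℝ) ≤ 1 + t := by linarith
  have hpow1 : (1:ℝ) ≤ (1+t)^(3*p+2) := one_le_pow₀ h1t
  by_cases hcase : N₀ ≤ Mt t
  · have hb := hv (Mt t) hcase
    have hK₂n : K₂ ≤ Mt t :=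
      le_trans (le_trans (le_max_right _ _) (le_max_left _ _)) hcase
    have hSn : m/2 * (Mt t : ℝ) ≤ S (Mt t) := (hgrow (Mt t) hK₂n).1
    have hmt : m/2 * (Mt t : ℝ) ≤ t := le_trans hSn (key4 t ht)
    have hnt : ((Mt t : ℕ):ℝ) ≤ 2/m * t := by
      have heq : ((Mt t : ℕ):ℝ) = 2/m * (m/2 * (Mt t : ℝ)) := by field_simp
      rw [heq]
      exact mul_le_mul_of_nonneg_left hmt (by positivity)
    have hπ : ((Mt t : ℕ):ℝ)+1 ≤ c₃ * (1+t) := by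
      have e1 : 2/m ≤ c₃ := le_max_left _ _
      have e2 : 1 ≤ c₃ := le_max_right _ _
      have e3 : 2/m*t ≤ c₃*t := mul_le_mul_of_nonneg_right e1 ht
      calc ((Mt t : ℕ):ℝ)+1 ≤ 2/m*t + 1 := by linarith
        _ ≤ c₃*t + c₃ := by linarith
        _ = c₃*(1+t) := by ring
    have hq0 : (0:ℝ) ≤ ((Mt t : ℕ):ℝ)+1 := by
      have := Nat.cast_nonneg (α := ℝ) (Mt t); linarith
    have hq1 : (0:ℝ) ≤ (1+t)^(3*p+2) := by positivity
    calc |v (Mt t)| ≤ C₁*(((Mt t : ℕ):ℝ)+1)^(3*p+2) := hb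
      _ ≤ C₁*(c₃*(1+t))^(3*p+2) :=
        mul_le_mul_of_nonneg_left (pow_le_pow_left₀ hq0 hπ _) hC₁0
      _ = (C₁*c₃^(3*p+2)) * (1+t)^(3*p+2) := by rw [mul_pow]; ring
      _ ≤ (C₁*c₃^(3*p+2) + C₀) * (1+t)^(3*p+2) :=
        mul_le_mul_of_nonneg_right (by linarith) hq1
  · push_neg at hcase
    have hb : |v (Mt t)| ≤ C₀ :=
      Finset.single_le_sum (fun j _ => abs_nonneg (v j)) (Finset.mem_range.mpr hcase)
    calc |v (Mt t)| ≤ C₀ := hb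
      _ = C₀ * 1 := by ring
      _ ≤ C₀ * (1+t)^(3*p+2) := mul_le_mul_of_nonneg_left hpow1 hC₀0
      _ ≤ (C₁*c₃^(3*p+2) + C₀) * (1+t)^(3*p+2) :=
        mul_le_mul_of_nonneg_right (by linarith) (by positivity)

end CPPAux

/-- Proposition 2.3: there is an event `A` of probability one such that on `Ω_X ∩ A` the
sample path of a compound Poisson process is slowly growing. -/
theorem compoundPoisson_tempered_implies_slowlyGrowing
    {Ω : Type*} [MeasurableSpace Ω] (P : Measure Ω) [IsProbabilityMeasure P]
    (lam : ℝ) (Y T : ℕ → Ω → ℝ) (hX : IsCompoundPoisson P lam Y T) :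
    ∃ A : Set Ω, P A = 1 ∧ ∀ ω ∈ A, PathTempered (cppPath Y T) ω →
      SlowlyGrowing fun t => cppPath Y T t ω := by
  -- almost sure positivity of the interarrival times
  have hTpos : ∀ᵐ ω ∂P, ∀ k, 0 < T k ω := by
    rw [ae_all_iff]
    intro k
    have h0 : P {ω | T k ω ≤ 0} = 0 := by
      rw [hX.expT k 0]
      simp
    rw [ae_iff]
    have hset : {ω | ¬ 0 < T k ω} = {ω | T k ω ≤ 0} := by ext ω; simp [not_lt]
    rw [hset]
    exact h0
  -- Borel-Cantelli lower bound on the interarrival times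
  have hBC : ∀ᵐ ω ∂P, ∀ᶠ (n:ℕ) in atTop, ((n:ℝ)+1)⁻¹^2 < T n ω := by
    set s : ℕ → Set Ω := fun n => {ω | T n ω ≤ ((n:ℝ)+1)⁻¹^2} with hs_def
    have hle : ∀ n, P (s n) ≤ ENNReal.ofReal (lam * ((n:ℝ)+1)⁻¹^2) := by
      intro n
      rw [hs_def]
      simp only
      rw [hX.expT n _]
      apply ENNReal.ofReal_le_ofReal
      have := Real.add_one_le_exp (-(lam * ((n:ℝ)+1)⁻¹^2))
      linarith
    have hsummable : Summable (fun n : ℕ => lam * ((n:ℝ)+1)⁻¹^2) := by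
      apply Summable.mul_left
      have h1 : Summable (fun n : ℕ => 1/((n:ℝ))^2) :=
        Real.summable_one_div_nat_pow.mpr one_lt_two
      have h2 : Summable (fun n : ℕ => 1/(((n+1:ℕ)):ℝ)^2) :=
        (summable_nat_add_iff (f := fun n : ℕ => 1/((n:ℝ))^2) 1).mpr h1
      apply h2.congr
      intro n
      push_cast
      rw [one_div, inv_pow]
    have hnonneg : ∀ n : ℕ, 0 ≤ lam * ((n:ℝ)+1)⁻¹^2 := by
      intro n
      have := hX.lam_pos
      positivity
    have hsum : ∑' n, P (s n) ≠ ∞ := by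
      have h1 : ∑' (n:ℕ), P (s n) ≤ ∑' (n:ℕ), ENNReal.ofReal (lam * ((n:ℝ)+1)⁻¹^2) :=
        ENNReal.tsum_le_tsum hle
      have h2 : ∑' (n:ℕ), ENNReal.ofReal (lam * ((n:ℝ)+1)⁻¹^2)
          = ENNReal.ofReal (∑' (n:ℕ), lam * ((n:ℝ)+1)⁻¹^2) :=
        (ENNReal.ofReal_tsum_of_nonneg hnonneg hsummable).symm
      exact (lt_of_le_of_lt h1 (by rw [h2]; exact ENNReal.ofReal_lt_top)).ne
    have hlimsup := measure_limsup_atTop_eq_zero (μ := P) (s := s) hsum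
    have hae : ∀ᵐ ω ∂P, ω ∉ limsup s atTop := by
      rw [ae_iff]
      have : {ω | ¬ ω ∉ limsup s atTop} = limsup s atTop := by ext ω; simp
      rw [this]
      exact hlimsup
    filter_upwards [hae] with ω hω
    rw [mem_limsup_iff_frequently_mem, not_frequently] at hω
    filter_upwards [hω] with n hn
    have : ¬ T n ω ≤ ((n:ℝ)+1)⁻¹^2 := hn
    linarith [not_le.mp this]
  -- Integrability of T 0
  have hT0nn : ∀ᵐ ω ∂P, 0 ≤ T 0 ω := hTpos.mono fun ω h => (h 0).le
  have hmeas0 := hX.measurableT 0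
  have hint : Integrable (T 0) P := by
    refine ⟨hmeas0.aestronglyMeasurable, ?_⟩
    rw [hasFiniteIntegral_iff_norm]
    have e1 : ∫⁻ ω, ENNReal.ofReal ‖T 0 ω‖ ∂P = ∫⁻ ω, ENNReal.ofReal (T 0 ω) ∂P := by
      apply lintegral_congr_ae
      filter_upwards [hT0nn] with ω hω
      rw [Real.norm_eq_abs, abs_of_nonneg hω]
    rw [e1, lintegral_eq_lintegral_meas_lt P hT0nn hmeas0.aemeasurable]
    have e2 : ∫⁻ t in Ioi (0:ℝ), P {a | t < T 0 a}
        = ∫⁻ t in Ioi (0:ℝ), ENNReal.ofReal (Real.exp (-(lam * t))) := by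
      apply setLIntegral_congr_fun measurableSet_Ioi
      refine fun t ht => show P {a | t < T 0 a} = _ from ?_
      have hset : {a | t < T 0 a} = {a | T 0 a ≤ t}ᶜ := by ext a; simp [not_le]
      have hmeas : MeasurableSet {a | T 0 a ≤ t} := hmeas0 measurableSet_Iic
      rw [hset, measure_compl hmeas (measure_ne_top _ _), hX.expT 0 t, measure_univ]
      have he1 : Real.exp (-(lam * t)) ≤ 1 := by
        rw [Real.exp_le_one_iff]
        have := hX.lam_pos
        have ht' : (0:ℝ) < t := ht
        nlinarith
      rw [← ENNReal.ofReal_one, ← ENNReal.ofReal_sub 1 (by linarith)]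
      norm_num
    rw [e2]
    have hi : IntegrableOn (fun x : ℝ => Real.exp (-lam * x)) (Ioi 0) :=
      exp_neg_integrableOn_Ioi 0 hX.lam_pos
    have e3 : ∀ t : ℝ, ENNReal.ofReal (Real.exp (-(lam * t)))
        = ENNReal.ofReal ((fun x : ℝ => Real.exp (-lam * x)) t) := by
      intro t
      show ENNReal.ofReal (Real.exp (-(lam * t))) = ENNReal.ofReal (Real.exp (-lam * t))
      rw [neg_mul]
    simp_rw [e3]
    exact hi.lintegral_lt_top
  -- identical distribution
  have hident : ∀ i, IdentDistrib (T i) (T 0) P P := by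
    intro i
    refine ⟨(hX.measurableT i).aemeasurable, (hX.measurableT 0).aemeasurable, ?_⟩
    have h1 : IsProbabilityMeasure (Measure.map (T i) P) :=
      Measure.isProbabilityMeasure_map (hX.measurableT i).aemeasurable
    have h2 : IsProbabilityMeasure (Measure.map (T 0) P) :=
      Measure.isProbabilityMeasure_map (hX.measurableT 0).aemeasurable
    apply MeasureTheory.Measure.ext_of_Iic
    intro a
    rw [Measure.map_apply (hX.measurableT i) measurableSet_Iic,
      Measure.map_apply (hX.measurableT 0) measurableSet_Iic]
    have e1 : T i ⁻¹' Iic a = {ω | T i ω ≤ a} := rfl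
    have e2 : T 0 ⁻¹' Iic a = {ω | T 0 ω ≤ a} := rfl
    rw [e1, e2, hX.expT i a, hX.expT 0 a]
  -- pairwise independence
  have hpair : Pairwise (Function.onFun (IndepFun · · P) T) := by
    intro i j hij
    exact hX.indep.indepFun (show (Sum.inr i : ℕ ⊕ ℕ) ≠ Sum.inr j by simpa using hij)
  -- strong law of large numbers
  have hslln := strong_law_ae_real T hint hpair hident
  have hm : 0 < P[T 0] := by
    rw [integral_pos_iff_support_of_nonneg_ae hT0nn hint]
    have hsub : {ω | 0 < T 0 ω} ⊆ Function.support (T 0) := fun ω h => ne_of_gt h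
    have h1 : P {ω | 0 < T 0 ω} = 1 := by
      have h0 : P {ω | T 0 ω ≤ 0} = 0 := by rw [hX.expT 0 0]; simp
      have hmeas : MeasurableSet {ω | T 0 ω ≤ 0} := hmeas0 measurableSet_Iic
      have e : {ω | 0 < T 0 ω} = {ω | T 0 ω ≤ 0}ᶜ := by ext ω; simp [not_le]
      rw [e, measure_compl hmeas (measure_ne_top _ _), h0, measure_univ]
      simp
    calc (0:ℝ≥0∞) < 1 := by norm_num
      _ = P {ω | 0 < T 0 ω} := h1.symm
      _ ≤ P (Function.support (T 0)) := measure_mono hsub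
  -- the event
  set A : Set Ω := {ω | (∀ k, 0 < T k ω) ∧ (∀ᶠ (n:ℕ) in atTop, ((n:ℝ)+1)⁻¹^2 < T n ω) ∧
    Tendsto (fun n : ℕ => (∑ i ∈ Finset.range n, T i ω)/n) atTop (𝓝 (P[T 0]))} with hA_def
  have hAae : ∀ᵐ ω ∂P, ω ∈ A := by
    filter_upwards [hTpos, hBC, hslln] with ω h1 h2 h3
    exact ⟨h1, h2, h3⟩
  have hPA : P A = 1 := by
    have h0 : P Aᶜ = 0 := ae_iff.mp hAae
    refine le_antisymm prob_le_one ?_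
    have hu := measure_union_le (μ := P) A Aᶜ
    rw [union_compl_self, h0, add_zero, measure_univ] at hu
    exact hu
  refine ⟨A, hPA, ?_⟩
  rintro ω ⟨h1, h2, h3⟩ ⟨p, C, hC⟩
  obtain ⟨K₁, hK₁⟩ := eventually_atTop.mp h2
  have hIoo : ∀ᶠ n : ℕ in atTop,
      (∑ i ∈ Finset.range n, T i ω)/n ∈ Ioo (P[T 0]/2) (2*P[T 0]) :=
    h3.eventually_mem (Ioo_mem_nhds (by linarith) (by linarith))
  obtain ⟨K₂', hK₂'⟩ := eventually_atTop.mp (hIoo.and (eventually_ge_atTop 1))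
  have hgrow : ∀ n, max K₂' 1 ≤ n →
      (P[T 0])/2 * n ≤ ∑ i ∈ Finset.range n, T i ω ∧
      ∑ i ∈ Finset.range n, T i ω ≤ 2*(P[T 0])*n := by
    intro n hn
    have hn1 : 1 ≤ n := le_trans (le_max_right _ _) hn
    obtain ⟨⟨ha, hb⟩, -⟩ := hK₂' n (le_trans (le_max_left _ _) hn)
    have hnp : (0:ℝ) < n := by exact_mod_cast hn1
    constructor
    · have := (lt_div_iff₀ hnp).mp ha
      linarith
    · have := (div_lt_iff₀ hnp).mp hb
      linarith
  have hschw : ∀ φ : SchwartzMap ℝ ℝ, 0 ≤ schwartzNorm p φ := by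
    intro φ
    exact Finset.sum_nonneg fun k _ => Finset.sum_nonneg fun n _ => apply_nonneg _ _
  have hC' : ∀ φ : SchwartzMap ℝ ℝ,
      |∫ t in Ici (0:ℝ), cppPath Y T t ω * φ t| ≤ |C| * schwartzNorm p φ := by
    intro φ
    exact le_trans (hC φ) (mul_le_mul_of_nonneg_right (le_abs_self C) (hschw φ))
  exact CPPAux.det (fun i => Y i ω) (fun i => T i ω) (fun t => cppPath Y T t ω)
    (fun t => rfl) h1 K₁ hK₁ (P[T 0]) hm (max K₂' 1) hgrow p |C| (abs_nonneg C) hC'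
end
end

section
/- Let X be a compound Poisson process with jump heights (Y_i)_{i≥1}. Suppose there is a real number p > 0 such that E(|Y_1|^p) < ∞. Then there exists α > 0 such that almost surely limsup_{t→+∞} |X_t|/(1+t^α) < +∞. -/
open MeasureTheory ProbabilityTheory Filter
open scoped ENNReal Topology

noncomputable section

open Topology in
lemma det_aux {p : ℝ} (hp : 0 < p) (y : ℕ → ℝ) (s : ℕ → ℝ) (m : ℝ) (hm : 0 < m)
    (hS : Tendsto (fun n : ℕ => (n : ℝ)⁻¹ * s n) atTop (𝓝 m))
    (hY : ∀ᶠ i in atTop, |y i| ≤ (i : ℝ) ^ (2 / p)) :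
    Filter.limsup (fun t : ℝ =>
      ENNReal.ofReal (|∑ i ∈ Finset.range (Set.ncard {n : ℕ | s (n + 1) ≤ t}), y i|
        / (1 + t ^ (2 + 2 / p)))) Filter.atTop < ⊤ := by
  -- exponents
  set q : ℝ := 1 + 2 / p with hq
  have h2p : (0:ℝ) ≤ 2 / p := by positivity
  have hq1 : (1:ℝ) ≤ q := by rw [hq]; linarith
  have hqpos : 0 < q := lt_of_lt_of_le one_pos hq1
  -- n1 : eventually s n ≥ (m/2) n
  have hS' : ∀ᶠ n : ℕ in atTop, m / 2 ≤ (n : ℝ)⁻¹ * s n :=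
    hS.eventually (eventually_ge_nhds (by linarith))
  obtain ⟨n1, hn1⟩ := (hS'.and (eventually_ge_atTop 1)).exists_forall_of_atTop
  have hSn : ∀ n, n1 ≤ n → (m / 2) * n ≤ s n := by
    intro n hn
    obtain ⟨h1, h2⟩ := hn1 n hn
    have hnpos : (0:ℝ) < n := by
      have : 0 < n := h2
      exact_mod_cast this
    have hmul := mul_le_mul_of_nonneg_left h1 (le_of_lt hnpos)
    have heq : (n:ℝ) * ((n:ℝ)⁻¹ * s n) = s n := by field_simp
    rw [heq] at hmul
    linarith
  obtain ⟨i0, hi0⟩ := hY.exists_forall_of_atTop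
  set B0 : ℝ := ∑ i ∈ Finset.range i0, |y i| with hB0def
  have hB0 : 0 ≤ B0 := Finset.sum_nonneg fun _ _ => abs_nonneg _
  set C : ℝ := (n1 : ℝ) + 2 / m + 2 with hCdef
  have hmn : (0:ℝ) ≤ 2 / m := by positivity
  have hn1n : (0:ℝ) ≤ (n1:ℝ) := Nat.cast_nonneg _
  have hC2 : (2:ℝ) ≤ C := by rw [hCdef]; linarith
  have hCpos : (0:ℝ) < C := by linarith
  -- counting bound
  have hcount : ∀ t : ℝ, 0 ≤ t →
      (Set.ncard {n : ℕ | s (n + 1) ≤ t} : ℝ) ≤ C * (1 + t) := by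
    intro t ht
    set M : ℕ := n1 + ⌈2 * t / m⌉₊ with hMdef
    have hsub : {n : ℕ | s (n + 1) ≤ t} ⊆ ↑(Finset.range M) := by
      intro n hn
      simp only [Set.mem_setOf_eq] at hn
      simp only [Finset.coe_range, Set.mem_Iio]
      by_cases h : n1 ≤ n + 1
      · have h1 := hSn (n + 1) h
        have h2 : ((n:ℝ) + 1) ≤ 2 * t / m := by
          rw [le_div_iff₀ hm]
          push_cast at h1 ⊢
          nlinarith
        have h4 : ((n + 1 : ℕ) : ℝ) ≤ (⌈2 * t / m⌉₊ : ℝ) := by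
          push_cast
          exact h2.trans (Nat.le_ceil _)
        have h3 : (n + 1 : ℕ) ≤ ⌈2 * t / m⌉₊ := by exact_mod_cast h4
        omega
      · omega
    have hle : Set.ncard {n : ℕ | s (n + 1) ≤ t} ≤ M :=
      le_trans (Set.ncard_le_ncard hsub (Finset.range M).finite_toSet)
        (le_of_eq (by rw [Set.ncard_coe_finset, Finset.card_range]))
    have hceil : (⌈2 * t / m⌉₊ : ℝ) ≤ 2 * t / m + 1 :=
      le_of_lt (Nat.ceil_lt_add_one (by positivity))
    have hM : (M : ℝ) ≤ (n1 : ℝ) + 2 / m * t + 1 := by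
      push_cast [hMdef]
      have : 2 * t / m = 2 / m * t := by ring
      linarith [this ▸ hceil]
    have hn1c : (n1:ℝ) + 1 ≤ C := by rw [hCdef]; linarith
    have h2mC : 2 / m * t ≤ C * t := by
      apply mul_le_mul_of_nonneg_right _ ht
      rw [hCdef]; linarith
    have hCeq : C * (1 + t) = C + C * t := by ring
    calc (Set.ncard {n : ℕ | s (n + 1) ≤ t} : ℝ) ≤ (M : ℝ) := by exact_mod_cast hle
      _ ≤ (n1 : ℝ) + 2 / m * t + 1 := hM
      _ ≤ C * (1 + t) := by linarith
  -- sum bound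
  have hsum : ∀ M : ℕ, ∑ i ∈ Finset.range M, |y i| ≤ B0 + (M : ℝ) * (M : ℝ) ^ (2 / p) := by
    intro M
    have key : ∀ i ∈ Finset.range M,
        |y i| ≤ (if i < i0 then |y i| else 0) + (M : ℝ) ^ (2 / p) := by
      intro i hi
      have hiM : (i : ℝ) ≤ (M : ℝ) := by
        exact_mod_cast le_of_lt (Finset.mem_range.mp hi)
      by_cases h : i < i0
      · simp only [if_pos h]
        have : (0:ℝ) ≤ (M : ℝ) ^ (2 / p) := Real.rpow_nonneg (Nat.cast_nonneg _) _
        linarith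
      · simp only [if_neg h, zero_add]
        calc |y i| ≤ (i : ℝ) ^ (2 / p) := hi0 i (le_of_not_gt h)
          _ ≤ (M : ℝ) ^ (2 / p) := Real.rpow_le_rpow (Nat.cast_nonneg _) hiM h2p
    calc ∑ i ∈ Finset.range M, |y i|
        ≤ ∑ i ∈ Finset.range M, ((if i < i0 then |y i| else 0) + (M : ℝ) ^ (2 / p)) :=
          Finset.sum_le_sum key
      _ = (∑ i ∈ Finset.range M, (if i < i0 then |y i| else 0)) + (M:ℝ) * (M : ℝ) ^ (2 / p) := by
          rw [Finset.sum_add_distrib, Finset.sum_const, Finset.card_range, nsmul_eq_mul]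
      _ ≤ B0 + (M : ℝ) * (M : ℝ) ^ (2 / p) := by
          gcongr
          calc ∑ i ∈ Finset.range M, (if i < i0 then |y i| else 0)
              ≤ ∑ i ∈ Finset.range (M + i0), (if i < i0 then |y i| else 0) := by
                apply Finset.sum_le_sum_of_subset_of_nonneg
                · exact Finset.range_subset_range.mpr (Nat.le_add_right _ _)
                · intro i _ _; split <;> simp [abs_nonneg]
            _ = ∑ i ∈ Finset.range i0, (if i < i0 then |y i| else 0) := by
                symm
                apply Finset.sum_subset (Finset.range_subset_range.mpr (Nat.le_add_left _ _))
                intro i _ hi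
                simp only [Finset.mem_range, not_lt] at hi
                simp [Nat.not_lt.mpr hi]
            _ = B0 := by
                apply Finset.sum_congr rfl
                intro i hi
                simp [Finset.mem_range.mp hi]
  -- final eventual bound
  set D : ℝ := B0 + (2 * C) ^ q with hDdef
  have h2Cnn : (0:ℝ) ≤ (2*C) ^ q := Real.rpow_nonneg (by linarith) _
  have hDnn : 0 ≤ D := by rw [hDdef]; linarith
  have hev : ∀ᶠ t : ℝ in atTop,
      ENNReal.ofReal (|∑ i ∈ Finset.range (Set.ncard {n : ℕ | s (n + 1) ≤ t}), y i|
        / (1 + t ^ (2 + 2 / p))) ≤ ENNReal.ofReal 1 := by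
    filter_upwards [eventually_ge_atTop (1:ℝ), eventually_ge_atTop D] with t ht1 htD
    have ht0 : (0:ℝ) ≤ t := by linarith
    set N : ℕ := Set.ncard {n : ℕ | s (n + 1) ≤ t} with hNdef
    have hNC : (N : ℝ) ≤ C * (1 + t) := hcount t ht0
    have hCt : 0 < C * (1 + t) := by nlinarith
    have hXb : |∑ i ∈ Finset.range N, y i| ≤ B0 + (C * (1 + t)) ^ q := by
      calc |∑ i ∈ Finset.range N, y i| ≤ ∑ i ∈ Finset.range N, |y i| :=
            Finset.abs_sum_le_sum_abs _ _
        _ ≤ B0 + (N : ℝ) * (N : ℝ) ^ (2 / p) := hsum N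
        _ ≤ B0 + (C * (1 + t)) * (C * (1 + t)) ^ (2 / p) := by
            gcongr <;> positivity
        _ = B0 + (C * (1 + t)) ^ q := by
            rw [hq, Real.rpow_add hCt, Real.rpow_one]
    have hCt2 : C * (1 + t) ≤ 2 * C * t := by nlinarith
    have h2C : (C * (1 + t)) ^ q ≤ (2 * C) ^ q * t ^ q := by
      rw [← Real.mul_rpow (by linarith) ht0]
      exact Real.rpow_le_rpow (le_of_lt hCt) hCt2 (le_of_lt hqpos)
    have htq1 : (1:ℝ) ≤ t ^ q := Real.one_le_rpow ht1 (le_of_lt hqpos)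
    have hfinal : |∑ i ∈ Finset.range N, y i| ≤ t ^ (2 + 2 / p) := by
      have hB0t : B0 ≤ B0 * t ^ q := le_mul_of_one_le_right hB0 htq1
      have heqD : D * t ^ q = B0 * t ^ q + (2*C) ^ q * t ^ q := by rw [hDdef]; ring
      have h1 : |∑ i ∈ Finset.range N, y i| ≤ D * t ^ q := by linarith
      have h2 : D * t ^ q ≤ t ^ q * t := by
        rw [mul_comm]
        exact mul_le_mul_of_nonneg_left htD (by positivity)
      have h3 : t ^ q * t = t ^ (2 + 2 / p) := by
        rw [← Real.rpow_add_one (by linarith : t ≠ 0) q]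
        congr 1
        rw [hq]; ring
      linarith
    have hden : (0:ℝ) < 1 + t ^ (2 + 2 / p) := by
      have : (0:ℝ) ≤ t ^ (2 + 2/p) := Real.rpow_nonneg ht0 _
      linarith
    apply ENNReal.ofReal_le_ofReal
    rw [div_le_one hden]
    linarith
  have hle := Filter.limsup_le_of_le (by isBoundedDefault) hev
  exact lt_of_le_of_lt hle ENNReal.ofReal_lt_top

/-- Proposition 2.4(i): if the jump heights have a finite absolute moment of some positive
order, then for some `α > 0`, a.s. `limsup_{t→∞} |X_t|/(1+t^α) < ∞`. -/
theorem compoundPoisson_moment_limsup_lt_top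
    {Ω : Type*} [MeasurableSpace Ω] (P : Measure Ω) [IsProbabilityMeasure P]
    (lam : ℝ) (Y T : ℕ → Ω → ℝ) (hX : IsCompoundPoisson P lam Y T)
    (p : ℝ) (hp : 0 < p) (hmom : ∫⁻ ω, ENNReal.ofReal (|Y 0 ω| ^ p) ∂P < ⊤) :
    ∃ α : ℝ, 0 < α ∧ ∀ᵐ ω ∂P,
      Filter.limsup (fun t : ℝ =>
        ENNReal.ofReal (|cppPath Y T t ω| / (1 + t ^ α))) Filter.atTop < ⊤ := by
  obtain ⟨lam_pos, mY, mT, indep, idY, expT⟩ := hX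
  set I : ℝ≥0∞ := ∫⁻ ω, ENNReal.ofReal (|Y 0 ω| ^ p) ∂P with hIdef
  -- T 0 is a.s. positive
  have hT0null : P {ω | T 0 ω ≤ 0} = 0 := by
    rw [expT 0 0]
    simp
  have hTpos : ∀ᵐ ω ∂P, 0 < T 0 ω := by
    have he : {ω | ¬ 0 < T 0 ω} = {ω | T 0 ω ≤ 0} := by ext ω; simp [not_lt]
    rw [ae_iff, he]
    exact hT0null
  have hTnn : 0 ≤ᵐ[P] T 0 := hTpos.mono fun ω h => le_of_lt h
  -- tail formula
  have htail : ∀ t : ℝ, t ∈ Set.Ioi (0:ℝ) →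
      P {a | t < T 0 a} = ENNReal.ofReal (Real.exp (-(lam * t))) := by
    intro t ht
    have ht' : (0:ℝ) < t := ht
    have hms : MeasurableSet {a | T 0 a ≤ t} := measurableSet_le (mT 0) measurable_const
    have hc : {a : Ω | t < T 0 a} = {a | T 0 a ≤ t}ᶜ := by ext a; simp [not_le]
    have hee : Real.exp (-(lam * t)) ≤ 1 := by
      rw [Real.exp_le_one_iff]
      nlinarith
    rw [hc, measure_compl hms (measure_ne_top _ _), measure_univ, expT 0 t,
      show (1:ℝ≥0∞) = ENNReal.ofReal 1 by simp,
      ← ENNReal.ofReal_sub _ (by linarith : (0:ℝ) ≤ 1 - Real.exp (-(lam * t)))]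
    congr 1
    ring
  -- integrability of T 0
  have hint : Integrable (T 0) P := by
    refine ⟨(mT 0).aestronglyMeasurable, ?_⟩
    have hexp : IntegrableOn (fun x => Real.exp (-lam * x)) (Set.Ioi 0) :=
      exp_neg_integrableOn_Ioi 0 lam_pos
    have h3 : ∫⁻ t in Set.Ioi (0:ℝ), ENNReal.ofReal (Real.exp (-(lam * t))) < ⊤ := by
      have h4 := hexp.2
      rw [hasFiniteIntegral_iff_norm] at h4
      refine lt_of_le_of_lt (le_of_eq ?_) h4
      apply lintegral_congr
      intro t
      rw [Real.norm_eq_abs, abs_of_nonneg (Real.exp_nonneg _), neg_mul]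
    rw [hasFiniteIntegral_iff_ofReal hTnn,
      lintegral_eq_lintegral_meas_lt P hTnn (mT 0).aemeasurable]
    refine lt_of_le_of_lt (le_of_eq ?_) h3
    exact setLIntegral_congr_fun measurableSet_Ioi htail
  -- positivity of the mean
  have hm : 0 < ∫ ω, T 0 ω ∂P := by
    rw [integral_pos_iff_support_of_nonneg_ae hTnn hint]
    have hsupp : {ω | 0 < T 0 ω} ⊆ Function.support (T 0) := fun ω h => ne_of_gt h
    have hms : MeasurableSet {ω | 0 < T 0 ω} := measurableSet_lt measurable_const (mT 0)
    have h1 : P {ω | 0 < T 0 ω} = 1 := by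
      rw [← prob_compl_eq_zero_iff hms]
      refine measure_mono_null ?_ hT0null
      intro ω hω
      simpa [not_lt] using hω
    calc (0:ℝ≥0∞) < 1 := by norm_num
      _ = P {ω | 0 < T 0 ω} := h1.symm
      _ ≤ P (Function.support (T 0)) := measure_mono hsupp
  -- SLLN for T
  have pairT : Pairwise (Function.onFun (IndepFun · · P) T) := fun i j hij =>
    indep.indepFun (show (Sum.inr i : ℕ ⊕ ℕ) ≠ Sum.inr j by simpa using hij)
  have identT : ∀ i, IdentDistrib (T i) (T 0) P P := by
    intro i
    refine ⟨(mT i).aemeasurable, (mT 0).aemeasurable, ?_⟩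
    have h1 : IsProbabilityMeasure (P.map (T i)) := Measure.isProbabilityMeasure_map (mT i).aemeasurable
    have h2 : IsProbabilityMeasure (P.map (T 0)) := Measure.isProbabilityMeasure_map (mT 0).aemeasurable
    refine Measure.ext_of_Iic _ _ fun x => ?_
    rw [Measure.map_apply (mT i) measurableSet_Iic, Measure.map_apply (mT 0) measurableSet_Iic]
    show P {ω | T i ω ≤ x} = P {ω | T 0 ω ≤ x}
    rw [expT i x, expT 0 x]
  have hslln := strong_law_ae T hint pairT identT
  -- Borel-Cantelli for Y
  set s2 : ℕ → Set Ω := fun i => {ω | (i:ℝ) ^ (2:ℝ) ≤ |Y i ω| ^ p} with hs2def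
  have hA : ∀ i : ℕ, MeasurableSet {x : ℝ | (i:ℝ) ^ (2:ℝ) ≤ |x| ^ p} := fun i =>
    measurableSet_le measurable_const
      ((Real.continuous_rpow_const hp.le).measurable.comp measurable_abs)
  have hmeasf : Measurable (fun ω => ENNReal.ofReal (|Y 0 ω| ^ p)) :=
    (((Real.continuous_rpow_const hp.le).measurable.comp measurable_abs).comp
      (mY 0)).ennreal_ofReal
  have hclaim : ∀ i : ℕ, ENNReal.ofReal ((i:ℝ) ^ (2:ℝ)) * P (s2 i) ≤ I := by
    intro i
    have h1 : P (s2 i) = P {ω | (i:ℝ) ^ (2:ℝ) ≤ |Y 0 ω| ^ p} := by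
      have e1 : s2 i = Y i ⁻¹' {x | (i:ℝ) ^ (2:ℝ) ≤ |x| ^ p} := rfl
      have e2 : {ω | (i:ℝ) ^ (2:ℝ) ≤ |Y 0 ω| ^ p} =
          Y 0 ⁻¹' {x | (i:ℝ) ^ (2:ℝ) ≤ |x| ^ p} := rfl
      rw [e1, e2, ← Measure.map_apply (mY i) (hA i), ← Measure.map_apply (mY 0) (hA i), idY i]
    rw [h1]
    have hsub : {ω | (i:ℝ) ^ (2:ℝ) ≤ |Y 0 ω| ^ p} ⊆
        {ω | ENNReal.ofReal ((i:ℝ) ^ (2:ℝ)) ≤ ENNReal.ofReal (|Y 0 ω| ^ p)} :=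
      fun ω h => ENNReal.ofReal_le_ofReal h
    calc ENNReal.ofReal ((i:ℝ) ^ (2:ℝ)) * P {ω | (i:ℝ) ^ (2:ℝ) ≤ |Y 0 ω| ^ p}
        ≤ ENNReal.ofReal ((i:ℝ) ^ (2:ℝ)) *
          P {ω | ENNReal.ofReal ((i:ℝ) ^ (2:ℝ)) ≤ ENNReal.ofReal (|Y 0 ω| ^ p)} :=
          mul_le_mul_right (measure_mono hsub) _
      _ ≤ I := mul_meas_ge_le_lintegral₀ hmeasf.aemeasurable _
  have hIne : I ≠ ⊤ := hmom.ne
  have hsumP : ∑' i, P (s2 i) ≠ ⊤ := by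
    have hb : ∀ i : ℕ, P (s2 (i+1)) ≤ I / ENNReal.ofReal (((i:ℝ)+1) ^ (2:ℝ)) := by
      intro i
      have hpos : 0 < ((i:ℝ)+1) ^ (2:ℝ) := Real.rpow_pos_of_pos (by positivity) _
      have h0 : ENNReal.ofReal (((i:ℝ)+1) ^ (2:ℝ)) ≠ 0 :=
        ne_of_gt (ENNReal.ofReal_pos.mpr hpos)
      rw [ENNReal.le_div_iff_mul_le (Or.inl h0) (Or.inl ENNReal.ofReal_ne_top), mul_comm]
      have := hclaim (i+1)
      push_cast at this
      exact this
    have hs0 : Summable (fun i : ℕ => (((i:ℝ)+1) ^ (2:ℝ))⁻¹) := by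
      have h1 : Summable (fun n : ℕ => 1 / (n:ℝ) ^ (2:ℝ)) :=
        Real.summable_one_div_nat_rpow.mpr (by norm_num)
      have h := (summable_nat_add_iff 1).mpr h1
      refine h.congr fun i => ?_
      push_cast
      rw [one_div]
    have htsum : ∑' i : ℕ, ENNReal.ofReal ((((i:ℝ)+1) ^ (2:ℝ))⁻¹) ≠ ⊤ := by
      rw [← ENNReal.ofReal_tsum_of_nonneg (fun i => by positivity) hs0]
      exact ENNReal.ofReal_ne_top
    have hinv : ∀ i : ℕ, (ENNReal.ofReal (((i:ℝ)+1) ^ (2:ℝ)))⁻¹ =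
        ENNReal.ofReal ((((i:ℝ)+1) ^ (2:ℝ))⁻¹) := fun i =>
      (ENNReal.ofReal_inv_of_pos (Real.rpow_pos_of_pos (by positivity) _)).symm
    have hfin : ∑' i : ℕ, I / ENNReal.ofReal (((i:ℝ)+1) ^ (2:ℝ)) ≠ ⊤ := by
      simp_rw [div_eq_mul_inv]
      rw [ENNReal.tsum_mul_left]
      refine ENNReal.mul_ne_top hIne ?_
      simp_rw [hinv]
      exact htsum
    have hdecomp : ∑' i, P (s2 i) = P (s2 0) + ∑' i, P (s2 (i+1)) :=
      tsum_eq_zero_add' ENNReal.summable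
    rw [hdecomp]
    refine ENNReal.add_ne_top.mpr ⟨measure_ne_top _ _, ?_⟩
    exact ne_top_of_le_ne_top hfin (ENNReal.tsum_le_tsum hb)
  have hBC := MeasureTheory.ae_eventually_notMem hsumP
  -- combine
  refine ⟨2 + 2/p, by positivity, ?_⟩
  filter_upwards [hslln, hBC] with ω hω1 hω2
  have hYω : ∀ᶠ i in atTop, |Y i ω| ≤ (i:ℝ) ^ (2 / p) := by
    filter_upwards [hω2] with i hi
    have h2 : |Y i ω| ^ p ≤ (i:ℝ) ^ (2:ℝ) := le_of_not_ge hi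
    have h3 := Real.rpow_le_rpow (Real.rpow_nonneg (abs_nonneg _) p) h2
      (le_of_lt (inv_pos.mpr hp))
    rw [Real.rpow_rpow_inv (abs_nonneg _) hp.ne', ← Real.rpow_mul (Nat.cast_nonneg i)] at h3
    rw [div_eq_mul_inv]
    exact h3
  have hSω : Tendsto (fun n : ℕ => (n : ℝ)⁻¹ * ∑ j ∈ Finset.range n, T j ω) atTop
      (𝓝 (∫ x, T 0 x ∂P)) := by
    simpa [smul_eq_mul] using hω1
  have hfin := det_aux hp (fun i => Y i ω) (fun n => ∑ j ∈ Finset.range n, T j ω) _ hm hSω hYω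
  simp only [cppPath]
  exact hfin
end
end

section
/- Let X be a compound Poisson process with jump heights (Y_i)_{i≥1}. Suppose that E(|Y_1|^p) = +∞ for every p > 0. Then for every α > 0, almost surely limsup_{t→+∞} |X_t|/(1+t^α) = +∞. -/
open MeasureTheory ProbabilityTheory Filter

noncomputable section

open scoped ENNReal

lemma lint_le_tsum {Ω : Type*} [MeasurableSpace Ω] (μ : Measure Ω) (g : Ω → ℝ≥0∞)
    (hg : Measurable g) :
    ∫⁻ ω, g ω ∂μ ≤ ∑' n : ℕ, μ {ω | (n : ℝ≥0∞) < g ω} := by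
  have hms : ∀ n : ℕ, MeasurableSet {ω | (n : ℝ≥0∞) < g ω} := fun n =>
    measurableSet_lt measurable_const hg
  have hpt : ∀ ω, g ω ≤ ∑' n : ℕ, Set.indicator {ω' | (n : ℝ≥0∞) < g ω'} (fun _ => (1:ℝ≥0∞)) ω := by
    intro ω
    by_cases htop : g ω = ⊤
    · have h1 : ∀ n : ℕ, Set.indicator {ω' | (n : ℝ≥0∞) < g ω'} (fun _ => (1:ℝ≥0∞)) ω = 1 := by
        intro n
        rw [Set.indicator_of_mem]
        exact Set.mem_setOf.2 (htop ▸ ENNReal.natCast_lt_top n)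
      simp only [h1]
      rw [ENNReal.tsum_const_eq_top_of_ne_zero one_ne_zero]
      exact le_top
    · set m : ℕ := ⌈(g ω).toReal⌉₊ with hm
      have hle : g ω ≤ (m : ℝ≥0∞) := by
        rw [← ENNReal.ofReal_toReal htop, ← ENNReal.ofReal_natCast]
        exact ENNReal.ofReal_le_ofReal (Nat.le_ceil _)
      refine hle.trans ?_
      have : (m : ℝ≥0∞) = ∑ n ∈ Finset.range m,
          Set.indicator {ω' | (n : ℝ≥0∞) < g ω'} (fun _ => (1:ℝ≥0∞)) ω := by
        rw [Finset.sum_congr rfl (fun n hn => ?_), Finset.sum_const, nsmul_eq_mul, mul_one,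
          Finset.card_range]
        rw [Set.indicator_of_mem]
        refine Set.mem_setOf.2 ?_
        have hn' : (n : ℝ) < (g ω).toReal := Nat.lt_ceil.1 (Finset.mem_range.1 hn)
        rw [← ENNReal.ofReal_toReal htop, ← ENNReal.ofReal_natCast]
        exact (ENNReal.ofReal_lt_ofReal_iff_of_nonneg (by positivity)).2 hn'
      rw [this]
      exact ENNReal.sum_le_tsum _
  calc ∫⁻ ω, g ω ∂μ
      ≤ ∫⁻ ω, ∑' n : ℕ, Set.indicator {ω' | (n : ℝ≥0∞) < g ω'} (fun _ => (1:ℝ≥0∞)) ω ∂μ :=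
        lintegral_mono hpt
    _ = ∑' n : ℕ, ∫⁻ ω, Set.indicator {ω' | (n : ℝ≥0∞) < g ω'} (fun _ => (1:ℝ≥0∞)) ω ∂μ :=
        lintegral_tsum (fun n => ((measurable_const.indicator (hms n)).aemeasurable))
    _ = ∑' n : ℕ, μ {ω' | (n : ℝ≥0∞) < g ω'} := by
        refine tsum_congr fun n => ?_
        simp [lintegral_indicator, hms n]

lemma indep_pullback {Ω : Type*} [MeasurableSpace Ω] {P : Measure Ω} {f : ℕ ⊕ ℕ → Ω → ℝ}
    (h : iIndepFun f P) (hf : ∀ j, Measurable (f j))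
    (g : ℕ → ℕ ⊕ ℕ) (hg : Function.Injective g)
    (B : ℕ → Set ℝ) (hB : ∀ n, MeasurableSet (B n)) :
    iIndepSet (fun n => f (g n) ⁻¹' B n) P := by
  classical
  rw [iIndepSet_iff_meas_biInter (fun n => (hf _) (hB n))]
  intro s
  set sets : ℕ ⊕ ℕ → Set ℝ :=
    fun j => if h' : ∃ n ∈ s, g n = j then B h'.choose else Set.univ with hsets
  have hkey : ∀ n ∈ s, sets (g n) = B n := by
    intro n hn
    have hex : ∃ m ∈ s, g m = g n := ⟨n, hn, rfl⟩
    simp only [hsets, dif_pos hex]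
    obtain ⟨-, h2⟩ := hex.choose_spec
    rw [hg h2]
  have hms : ∀ j ∈ s.map ⟨g, hg⟩, MeasurableSet (sets j) := by
    intro j _
    by_cases h' : ∃ n ∈ s, g n = j
    · simp only [hsets, dif_pos h']; exact hB _
    · simp only [hsets, dif_neg h']; exact MeasurableSet.univ
  have := h.measure_inter_preimage_eq_mul (s.map ⟨g, hg⟩) hms
  rw [Finset.prod_map] at this
  have hI : (⋂ j ∈ s.map ⟨g, hg⟩, f j ⁻¹' sets j) = ⋂ n ∈ s, f (g n) ⁻¹' B n := by
    ext ω
    simp only [Set.mem_iInter, Finset.mem_map, Function.Embedding.coeFn_mk]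
    constructor
    · intro hx n hn
      have := hx (g n) ⟨n, hn, rfl⟩
      rwa [hkey n hn] at this
    · rintro hx j ⟨n, hn, rfl⟩
      rw [hkey n hn]
      exact hx n hn
  rw [hI] at this
  rw [this]
  refine Finset.prod_congr rfl fun n hn => ?_
  rw [Function.Embedding.coeFn_mk, hkey n hn]

lemma det_core {Ω : Type*} (Y T : ℕ → Ω → ℝ) (ω : Ω) (α : ℝ) (hα : 0 < α)
    (h1 : ∀ n, 0 < T n ω)
    (h2 : ∃ᶠ n in atTop, 1 < T n ω)
    (h3 : ∀ᶠ n in atTop, T n ω ≤ (n : ℝ))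
    (h4 : ∃ᶠ n : ℕ in atTop, (n : ℝ) ^ (3 * α + 1) < |Y n ω|) :
    Filter.limsup (fun t : ℝ =>
      ENNReal.ofReal (|cppPath Y T t ω| / (1 + t ^ α))) Filter.atTop = ⊤ := by
  set q : ℝ := 3 * α + 1 with hqdef
  set S : ℕ → ℝ := fun n => ∑ j ∈ Finset.range (n + 1), T j ω with hSdef
  have hS0 : ∀ n, 0 < S n := fun n =>
    Finset.sum_pos (fun j _ => h1 j) (by simp)
  have hSmono : StrictMono S := by
    apply strictMono_nat_of_lt_succ
    intro n
    have : S (n + 1) = S n + T (n + 1) ω := Finset.sum_range_succ _ _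
    rw [this]
    linarith [h1 (n + 1)]
  -- S tends to infinity
  have hStend : Tendsto S atTop atTop := by
    rw [tendsto_atTop]
    intro b
    have hGinf : {n : ℕ | 1 < T n ω}.Infinite := Nat.frequently_atTop_iff_infinite.mp h2
    obtain ⟨F, hFsub, hFcard⟩ := hGinf.exists_subset_card_eq ⌈b⌉₊
    rw [eventually_atTop]
    refine ⟨F.sup id, fun n hn => ?_⟩
    have hFsubset : F ⊆ Finset.range (n + 1) := by
      intro j hj
      rw [Finset.mem_range]
      exact lt_of_le_of_lt (le_trans (Finset.le_sup (f := id) hj) hn) (Nat.lt_succ_self n)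
    have h1' : (F.card : ℝ) ≤ ∑ j ∈ F, T j ω := by
      have := Finset.card_nsmul_le_sum F (fun j => T j ω) 1
        (fun j hj => le_of_lt (hFsub hj))
      simpa using this
    have h2' : ∑ j ∈ F, T j ω ≤ S n :=
      Finset.sum_le_sum_of_subset_of_nonneg hFsubset (fun j _ _ => le_of_lt (h1 j))
    have h3' : b ≤ (⌈b⌉₊ : ℝ) := Nat.le_ceil b
    rw [hFcard] at h1'
    linarith
  -- value of the path at jump times
  have hval : ∀ n, cppPath Y T (S n) ω = ∑ i ∈ Finset.range (n + 1), Y i ω := by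
    intro n
    have hset : {m : ℕ | ∑ j ∈ Finset.range (m + 1), T j ω ≤ S n} = Set.Iic n := by
      ext m
      simp only [Set.mem_setOf_eq, Set.mem_Iic]
      exact hSmono.le_iff_le
    rw [cppPath, hset, ← Finset.coe_Iic, Set.ncard_coe_finset, Nat.card_Iic]
  -- the limsup is at least every natural number
  have hfreq : ∀ k : ℕ, (k : ℝ≥0∞) ≤ Filter.limsup (fun t : ℝ =>
      ENNReal.ofReal (|cppPath Y T t ω| / (1 + t ^ α))) Filter.atTop := by
    intro k
    refine le_limsup_of_frequently_le' ?_
    rw [frequently_atTop]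
    intro M
    obtain ⟨N₀, hN₀⟩ := eventually_atTop.1 h3
    obtain ⟨N₁, hN₁⟩ := eventually_atTop.1 (tendsto_atTop.1 hStend M)
    obtain ⟨n, hnN, hnY⟩ := frequently_atTop.1 h4
      (max (max (N₀ + 1) (N₁ + 1)) (max 2 (max (4 * k) ⌈S N₀⌉₊)))
    have hn2 : (2 : ℕ) ≤ n := le_trans (le_max_left _ _) (le_trans (le_max_right _ _) hnN)
    have hnN₀ : N₀ + 1 ≤ n := le_trans (le_max_left _ _) (le_trans (le_max_left _ _) hnN)
    have hnN₁ : N₁ + 1 ≤ n := le_trans (le_max_right _ _) (le_trans (le_max_left _ _) hnN)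
    have hn4k : 4 * k ≤ n := le_trans (le_max_left _ _) (le_trans (le_max_right _ _)
      (le_trans (le_max_right _ _) hnN))
    have hnceil : (⌈S N₀⌉₊ : ℕ) ≤ n := le_trans (le_max_right _ _) (le_trans (le_max_right _ _)
      (le_trans (le_max_right _ _) hnN))
    have hnpos : (0 : ℝ) < (n : ℝ) := by exact_mod_cast Nat.lt_of_lt_of_le (by norm_num) hn2
    -- S n is at most n ^ 3
    have hTsum : S n ≤ (n : ℝ) + (n : ℝ) * (n : ℝ) := by
      have hsplit : S N₀ + ∑ j ∈ Finset.Ico (N₀ + 1) (n + 1), T j ω = S n := by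
        simpa using Finset.sum_range_add_sum_Ico (fun j => T j ω)
          (Nat.succ_le_succ (le_trans (Nat.le_succ N₀) hnN₀))
      have hbound : ∑ j ∈ Finset.Ico (N₀ + 1) (n + 1), T j ω ≤ (n : ℝ) * (n : ℝ) := by
        have hb : ∀ j ∈ Finset.Ico (N₀ + 1) (n + 1), T j ω ≤ (n : ℝ) := by
          intro j hj
          obtain ⟨hj1, hj2⟩ := Finset.mem_Ico.1 hj
          refine le_trans (hN₀ j (le_trans (Nat.le_succ N₀) hj1)) ?_
          exact_mod_cast Nat.lt_succ_iff.1 hj2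
        calc ∑ j ∈ Finset.Ico (N₀ + 1) (n + 1), T j ω
            ≤ ∑ _j ∈ Finset.Ico (N₀ + 1) (n + 1), (n : ℝ) := Finset.sum_le_sum hb
          _ = ((n + 1) - (N₀ + 1) : ℕ) * (n : ℝ) := by
              rw [Finset.sum_const, Nat.card_Ico, nsmul_eq_mul]
          _ ≤ (n : ℝ) * (n : ℝ) := by
              have : ((n + 1) - (N₀ + 1) : ℕ) ≤ n := by omega
              have h' : (((n + 1) - (N₀ + 1) : ℕ) : ℝ) ≤ (n : ℝ) := by exact_mod_cast this
              nlinarith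
      have hSN₀ : S N₀ ≤ (n : ℝ) := le_trans (Nat.le_ceil _) (by exact_mod_cast hnceil)
      linarith
    have hncube : S n ≤ (n : ℝ) ^ (3 : ℕ) := by
      have h2r : (2 : ℝ) ≤ (n : ℝ) := by exact_mod_cast hn2
      nlinarith
    -- decompose n = m + 1
    set m := n - 1 with hmdef
    have hnm : n = m + 1 := by omega
    have hvalA : cppPath Y T (S n) ω = ∑ i ∈ Finset.range (n + 1), Y i ω := hval n
    have hvalB : cppPath Y T (S m) ω = ∑ i ∈ Finset.range n, Y i ω := by
      rw [hval m, hnm]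
    have hdiff : cppPath Y T (S n) ω - cppPath Y T (S m) ω = Y n ω := by
      rw [hvalA, hvalB, Finset.sum_range_succ]; ring
    have hAB : (n : ℝ) ^ q / 2 ≤ |cppPath Y T (S n) ω| ∨
        (n : ℝ) ^ q / 2 ≤ |cppPath Y T (S m) ω| := by
      by_contra hc
      push_neg at hc
      have : |Y n ω| ≤ |cppPath Y T (S n) ω| + |cppPath Y T (S m) ω| := by
        rw [← hdiff]; exact abs_sub _ _
      linarith [hc.1, hc.2, hnY]
    have hn1r : (1 : ℝ) ≤ (n : ℝ) := by
      have : (1 : ℕ) ≤ n := by omega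
      exact_mod_cast this
    have main : ∀ t : ℝ, 0 < t → t ≤ (n : ℝ) ^ (3 : ℕ) →
        (n : ℝ) ^ q / 2 ≤ |cppPath Y T t ω| →
        (k : ℝ≥0∞) ≤ ENNReal.ofReal (|cppPath Y T t ω| / (1 + t ^ α)) := by
      intro t htpos htle hXt
      have htα : t ^ α ≤ (n : ℝ) ^ (3 * α) := by
        have h' := Real.rpow_le_rpow (le_of_lt htpos) htle (le_of_lt hα)
        rwa [← Real.rpow_natCast (n : ℝ) 3, ← Real.rpow_mul (le_of_lt hnpos),
          show ((3 : ℕ) : ℝ) * α = 3 * α by push_cast; ring] at h'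
      have hone : (1 : ℝ) ≤ (n : ℝ) ^ (3 * α) := by
        rw [← Real.one_rpow (3 * α)]
        exact Real.rpow_le_rpow zero_le_one hn1r (by positivity)
      have htαpos : 0 < t ^ α := Real.rpow_pos_of_pos htpos α
      have hden : 1 + t ^ α ≤ 2 * (n : ℝ) ^ (3 * α) := by linarith
      have hdenpos : (0 : ℝ) < 1 + t ^ α := by linarith
      have hdiv : (n : ℝ) ^ q / 2 / (2 * (n : ℝ) ^ (3 * α)) ≤
          |cppPath Y T t ω| / (1 + t ^ α) :=
        div_le_div₀ (abs_nonneg _) hXt hdenpos hden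
      have hrpos : (0 : ℝ) < (n : ℝ) ^ (3 * α) := Real.rpow_pos_of_pos hnpos _
      have hcalc : (n : ℝ) ^ q / 2 / (2 * (n : ℝ) ^ (3 * α)) = (n : ℝ) / 4 := by
        rw [hqdef, Real.rpow_add hnpos, Real.rpow_one]
        field_simp
        ring
      have hkn : (k : ℝ) ≤ (n : ℝ) / 4 := by
        have h4k : ((4 * k : ℕ) : ℝ) ≤ (n : ℝ) := by exact_mod_cast hn4k
        push_cast at h4k
        linarith
      calc (k : ℝ≥0∞) = ENNReal.ofReal (k : ℝ) := (ENNReal.ofReal_natCast k).symm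
        _ ≤ _ := ENNReal.ofReal_le_ofReal (by rw [hcalc] at hdiv; linarith)
    have hmN₁ : N₁ ≤ m := by omega
    have hSmM : M ≤ S m := hN₁ m hmN₁
    have hSnM : M ≤ S n := hN₁ n (by omega)
    have hSmle : S m ≤ (n : ℝ) ^ (3 : ℕ) :=
      le_trans (le_of_lt (hSmono (by omega : m < n))) hncube
    rcases hAB with hA | hB
    · exact ⟨S n, hSnM, main (S n) (hS0 n) hncube hA⟩
    · exact ⟨S m, hSmM, main (S m) (hS0 m) hSmle hB⟩
  by_contra hne
  obtain ⟨k, hk⟩ := ENNReal.exists_nat_gt hne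
  exact absurd (hfreq k) (not_le.2 hk)

/-- Proposition 2.4(ii): if the jump heights have no finite absolute moment of any positive
order, then for every `α > 0`, a.s. `limsup_{t→∞} |X_t|/(1+t^α) = +∞`. -/
theorem compoundPoisson_noMoment_limsup_eq_top
    {Ω : Type*} [MeasurableSpace Ω] (P : Measure Ω) [IsProbabilityMeasure P]
    (lam : ℝ) (Y T : ℕ → Ω → ℝ) (hX : IsCompoundPoisson P lam Y T)
    (hmom : ∀ p : ℝ, 0 < p → ∫⁻ ω, ENNReal.ofReal (|Y 0 ω| ^ p) ∂P = ⊤) :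
    ∀ α : ℝ, 0 < α → ∀ᵐ ω ∂P,
      Filter.limsup (fun t : ℝ =>
        ENNReal.ofReal (|cppPath Y T t ω| / (1 + t ^ α))) Filter.atTop = ⊤ := by
  intro α hα
  have hlam := hX.lam_pos
  set q : ℝ := 3 * α + 1 with hq
  have hq0 : (0 : ℝ) < q := by rw [hq]; linarith
  set p : ℝ := q⁻¹ with hpdef
  have hp0 : (0 : ℝ) < p := inv_pos.2 hq0
  set f : ℕ ⊕ ℕ → Ω → ℝ := Sum.elim Y T with hf
  have hfm : ∀ j, Measurable (f j) := by
    rintro (i | i)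
    exacts [hX.measurableY i, hX.measurableT i]
  -- the events for the jump heights
  set B : ℕ → Set ℝ := fun n => {x : ℝ | (n : ℝ) ^ q < |x|} with hB
  have hBm : ∀ n, MeasurableSet (B n) := fun n =>
    measurableSet_lt measurable_const (by fun_prop)
  set A : ℕ → Set Ω := fun n => Y n ⁻¹' B n with hA
  have hAm : ∀ n, MeasurableSet (A n) := fun n => (hX.measurableY n) (hBm n)
  have hkey : ∀ (n : ℕ) (y : ℝ), ((n : ℝ) < |y| ^ p ↔ (n : ℝ) ^ q < |y|) := by
    intro n y
    have hnq : (((n : ℝ) ^ q) ^ p) = (n : ℝ) := by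
      rw [← Real.rpow_mul (Nat.cast_nonneg n), hpdef, mul_inv_cancel₀ hq0.ne', Real.rpow_one]
    nth_rewrite 1 [← hnq]
    exact Real.rpow_lt_rpow_iff (Real.rpow_nonneg (Nat.cast_nonneg n) q) (abs_nonneg y) hp0
  have hsetEq : ∀ n : ℕ, {ω | (n : ℝ≥0∞) < ENNReal.ofReal (|Y 0 ω| ^ p)} = Y 0 ⁻¹' B n := by
    intro n
    ext ω
    simp only [Set.mem_setOf_eq, Set.mem_preimage, hB]
    rw [← ENNReal.ofReal_natCast, ENNReal.ofReal_lt_ofReal_iff_of_nonneg (Nat.cast_nonneg n)]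
    exact hkey n (Y 0 ω)
  have hmap : ∀ n, P (A n) = P (Y 0 ⁻¹' B n) := by
    intro n
    rw [hA]
    rw [← Measure.map_apply (hX.measurableY n) (hBm n), hX.idY n,
      Measure.map_apply (hX.measurableY 0) (hBm n)]
  have htsumA : ∑' n, P (A n) = ⊤ := by
    refine top_le_iff.1 ?_
    have h1 := lint_le_tsum P (fun ω => ENNReal.ofReal (|Y 0 ω| ^ p))
      (Measurable.ennreal_ofReal ((show Measurable fun x : ℝ => |x| ^ p by fun_prop).comp (hX.measurableY 0)))
    rw [hmom p hp0] at h1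
    refine le_trans h1 (le_of_eq (tsum_congr fun n => ?_))
    rw [hsetEq n, ← hmap n]
  have hindepA : iIndepSet A P :=
    indep_pullback hX.indep hfm Sum.inl Sum.inl_injective B hBm
  have hlimA : ∀ᵐ ω ∂P, ∃ᶠ n : ℕ in atTop, (n : ℝ) ^ q < |Y n ω| := by
    have h1 : P (limsup A atTop) = 1 := measure_limsup_eq_one hAm hindepA htsumA
    have h2 : P (limsup A atTop)ᶜ = 0 :=
      (prob_compl_eq_zero_iff (MeasurableSet.measurableSet_limsup hAm)).2 h1
    rw [measure_eq_zero_iff_ae_notMem] at h2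
    filter_upwards [h2] with ω hω
    have hmem : ω ∈ limsup A atTop := Set.not_notMem.1 hω
    exact mem_limsup_iff_frequently_mem.1 hmem
  -- the events T n > 1
  set C : ℕ → Set Ω := fun n => T n ⁻¹' Set.Ioi 1 with hC
  have hCm : ∀ n, MeasurableSet (C n) := fun n => (hX.measurableT n) measurableSet_Ioi
  have hexp_le_one : Real.exp (-lam) ≤ 1 := Real.exp_le_one_iff.2 (by linarith)
  have hPC : ∀ n, P (C n) = ENNReal.ofReal (Real.exp (-lam)) := by
    intro n
    have hcompl : C n = {ω | T n ω ≤ 1}ᶜ := by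
      ext ω
      simp [hC, not_le]
    have hms : MeasurableSet {ω | T n ω ≤ 1} :=
      measurableSet_le (hX.measurableT n) measurable_const
    rw [hcompl, measure_compl hms (measure_ne_top _ _), measure_univ, hX.expT n 1, mul_one,
      ← ENNReal.ofReal_one, ← ENNReal.ofReal_sub 1 (by linarith [Real.exp_pos (-lam)])]
    norm_num
  have htsumC : ∑' n, P (C n) = ⊤ := by
    rw [tsum_congr hPC]
    exact ENNReal.tsum_const_eq_top_of_ne_zero
      (ne_of_gt (ENNReal.ofReal_pos.2 (Real.exp_pos _)))
  have hindepC : iIndepSet C P :=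
    indep_pullback hX.indep hfm Sum.inr Sum.inr_injective (fun _ => Set.Ioi 1)
      (fun _ => measurableSet_Ioi)
  have hfreqT1 : ∀ᵐ ω ∂P, ∃ᶠ n : ℕ in atTop, 1 < T n ω := by
    have h1 : P (limsup C atTop) = 1 := measure_limsup_eq_one hCm hindepC htsumC
    have h2 : P (limsup C atTop)ᶜ = 0 :=
      (prob_compl_eq_zero_iff (MeasurableSet.measurableSet_limsup hCm)).2 h1
    rw [measure_eq_zero_iff_ae_notMem] at h2
    filter_upwards [h2] with ω hω
    have hmem : ω ∈ limsup C atTop := Set.not_notMem.1 hω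
    exact mem_limsup_iff_frequently_mem.1 hmem
  -- first Borel-Cantelli : eventually T n ≤ n
  set D : ℕ → Set Ω := fun n => {ω | (n : ℝ) < T n ω} with hD
  have hPD : ∀ n : ℕ, P (D n) = ENNReal.ofReal (Real.exp (-(lam * n))) := by
    intro n
    have hcompl : D n = {ω | T n ω ≤ (n : ℝ)}ᶜ := by
      ext ω
      simp [hD, not_le]
    have hms : MeasurableSet {ω | T n ω ≤ (n : ℝ)} :=
      measurableSet_le (hX.measurableT n) measurable_const
    have hle1 : Real.exp (-(lam * n)) ≤ 1 :=
      Real.exp_le_one_iff.2 (neg_nonpos.2 (mul_nonneg hlam.le (Nat.cast_nonneg n)))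
    rw [hcompl, measure_compl hms (measure_ne_top _ _), measure_univ, hX.expT n n,
      ← ENNReal.ofReal_one, ← ENNReal.ofReal_sub 1 (by linarith [Real.exp_pos (-(lam * n))])]
    norm_num
  have hsumm : Summable (fun n : ℕ => Real.exp (-(lam * n))) := by
    have hgeom : Summable (fun n : ℕ => Real.exp (-lam) ^ n) :=
      summable_geometric_of_lt_one (Real.exp_pos _).le (Real.exp_lt_one_iff.2 (by linarith))
    refine hgeom.congr fun n => ?_
    rw [← Real.exp_nat_mul]
    ring_nf
  have hDsum : ∑' n, P (D n) ≠ ⊤ := by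
    rw [tsum_congr hPD, ← ENNReal.ofReal_tsum_of_nonneg (fun n => (Real.exp_pos _).le) hsumm]
    exact ENNReal.ofReal_ne_top
  have hevT : ∀ᵐ ω ∂P, ∀ᶠ n : ℕ in atTop, T n ω ≤ (n : ℝ) := by
    have h0 : P (limsup D atTop) = 0 := measure_limsup_atTop_eq_zero hDsum
    rw [measure_eq_zero_iff_ae_notMem] at h0
    filter_upwards [h0] with ω hω
    rw [mem_limsup_iff_frequently_mem, not_frequently] at hω
    filter_upwards [hω] with n hn
    simpa [hD, not_lt] using hn
  -- T n > 0 a.s.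
  have hTpos : ∀ᵐ ω ∂P, ∀ n, 0 < T n ω := by
    rw [ae_all_iff]
    intro n
    have h0 : P {ω | T n ω ≤ 0} = 0 := by
      rw [hX.expT n 0]
      simp
    rw [ae_iff]
    convert h0 using 2
    ext ω
    simp [not_lt]
  filter_upwards [hTpos, hfreqT1, hevT, hlimA] with ω h1 h2 h3 h4
  exact det_core Y T ω α hα h1 h2 h3 (by rw [← hq]; exact h4)
end
end

section
/- For φ ∈ S(ℝ^d), let Φ(t) = ∫_{[t,+∞)} φ(s) ds (integral over the set {s ∈ ℝ^d : s ≥ t coordinatewise}). Let p ∈ ℕ and α, β ∈ ℕ^d be multi-indices with |α| ≤ p and |β| ≤ p. Then for every a ∈ ℝ^d there exists a finite constant C = C(p, d, a) such that for all φ ∈ S(ℝ^d), sup_{t ≥ a} |(1 + |t^α|) Φ^{(β)}(t)| ≤ C N_{p+2d}(φ), where t^α = Π_{i=1}^d t_i^{α_i} and Φ^{(β)} denotes the partial derivative of multi-order β. -/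
open MeasureTheory

noncomputable section

/-- Partial derivative in the `i`-th coordinate direction. -/
def pderivCoord {d : ℕ} (i : Fin d) (f : (Fin d → ℝ) → ℝ) : (Fin d → ℝ) → ℝ :=
  fun x => fderiv ℝ f x (Pi.single i 1)

/-- Mixed partial derivative `∂^β = ∂_1^{β 1} ⋯ ∂_d^{β d}`. -/
def mixedPartial {d : ℕ} (β : Fin d → ℕ) (f : (Fin d → ℝ) → ℝ) : (Fin d → ℝ) → ℝ :=
  (List.finRange d).foldr (fun i g => (pderivCoord i)^[β i] g) f

namespace TailAux

variable {d : ℕ}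

/-- The tail integral of a Schwartz function. -/
def T (ψ : SchwartzMap (Fin d → ℝ) ℝ) : (Fin d → ℝ) → ℝ :=
  fun t => ∫ u in Set.Ici t, ψ u

lemma image_add_Ici (t : Fin d → ℝ) :
    (fun v => t + v) '' Set.Ici (0 : Fin d → ℝ) = Set.Ici t := by
  ext u
  constructor
  · rintro ⟨v, hv, rfl⟩
    exact le_add_of_nonneg_right (Set.mem_Ici.mp hv)
  · intro hu
    exact ⟨u - t, by simpa [sub_nonneg] using hu, by simp⟩

lemma translate (g : (Fin d → ℝ) → ℝ) (t : Fin d → ℝ) :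
    ∫ u in Set.Ici t, g u = ∫ v in Set.Ici (0 : Fin d → ℝ), g (t + v) := by
  rw [← image_add_Ici t]
  exact (measurePreserving_add_left volume t).setIntegral_image_emb
    (MeasurableEquiv.addLeft t).measurableEmbedding g _

lemma integrable_comp_add {F : Type*} [NormedAddCommGroup F] (g : (Fin d → ℝ) → F)
    (hg : Integrable g (volume : Measure (Fin d → ℝ))) (t : Fin d → ℝ) (s : Set (Fin d → ℝ)) :
    Integrable (fun v => g (t + v)) ((volume : Measure (Fin d → ℝ)).restrict s) := by
  have : Integrable (fun v => g (t + v)) (volume : Measure (Fin d → ℝ)) := by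
    have := ((measurePreserving_add_left volume t).integrable_comp_emb
      (MeasurableEquiv.addLeft t).measurableEmbedding (g := g)).mpr hg
    exact this
  exact this.restrict

lemma fderiv_decay (ψ : SchwartzMap (Fin d → ℝ) ℝ) :
    ∃ C : ℝ, 0 ≤ C ∧ ∀ x, (1 + ‖x‖) ^ (d + 1) * ‖fderiv ℝ ψ x‖ ≤ C := by
  refine ⟨2 ^ (d+1) * (Finset.Iic ((d+1), 1)).sup
    (fun m => SchwartzMap.seminorm ℝ m.1 m.2) ψ, by positivity, fun x => ?_⟩
  have h := SchwartzMap.one_add_le_sup_seminorm_apply (𝕜 := ℝ) (m := ((d+1), 1))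
    (k := d+1) (n := 1) le_rfl le_rfl ψ x
  rwa [← norm_iteratedFDeriv_fderiv, norm_iteratedFDeriv_zero] at h

lemma one_add_norm_mul (x v : Fin d → ℝ) :
    1 + ‖v‖ ≤ (1 + ‖x‖) * (1 + ‖x + v‖) := by
  have h : ‖v‖ ≤ ‖x + v‖ + ‖x‖ := by
    calc ‖v‖ = ‖x + v - x‖ := by rw [add_sub_cancel_left]
    _ ≤ ‖x + v‖ + ‖x‖ := norm_sub_le _ _
  nlinarith [norm_nonneg x, norm_nonneg (x + v), norm_nonneg v]

lemma integrable_inv_pow :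
    Integrable (fun u : Fin d → ℝ => ((1 + ‖u‖) ^ (d + 1))⁻¹) (volume : Measure (Fin d → ℝ)) := by
  have h : ((Module.finrank ℝ (Fin d → ℝ) : ℝ)) < (d + 1 : ℝ) := by
    simp [Module.finrank_fintype_fun_eq_card]
  have := integrable_one_add_norm (E := Fin d → ℝ) (μ := volume) (r := (d + 1 : ℝ)) h
  refine this.congr (Filter.Eventually.of_forall fun u => ?_)
  have h1 : (0 : ℝ) < 1 + ‖u‖ := by positivity
  show (1 + ‖u‖) ^ (-((d:ℝ)+1)) = ((1 + ‖u‖) ^ (d+1))⁻¹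
  rw [show -((d:ℝ)+1) = -(((d+1 : ℕ)):ℝ) by push_cast; ring,
    Real.rpow_neg h1.le, Real.rpow_natCast]

lemma hasFDerivAt_T (ψ : SchwartzMap (Fin d → ℝ) ℝ) (t₀ : Fin d → ℝ) :
    HasFDerivAt (T ψ)
      (∫ v in Set.Ici (0 : Fin d → ℝ), fderiv ℝ ψ (t₀ + v)) t₀ := by
  have hrw : T ψ = fun t => ∫ v in Set.Ici (0 : Fin d → ℝ), ψ (t + v) :=
    funext fun t => translate ψ t
  rw [hrw]
  obtain ⟨C, hC0, hC⟩ := fderiv_decay ψ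
  set μ : Measure (Fin d → ℝ) := volume.restrict (Set.Ici (0 : Fin d → ℝ)) with hμ
  have key := hasFDerivAt_integral_of_dominated_of_fderiv_le
    (𝕜 := ℝ) (μ := μ) (x₀ := t₀)
    (F := fun t v => ψ (t + v)) (F' := fun t v => fderiv ℝ ψ (t + v))
    (bound := fun v => (C * (2 + ‖t₀‖) ^ (d + 1)) * ((1 + ‖v‖) ^ (d + 1))⁻¹)
    (Metric.ball_mem_nhds t₀ one_pos : Metric.ball t₀ 1 ∈ nhds t₀)
    (Filter.Eventually.of_forall fun x =>
      ((ψ.continuous.comp (continuous_const.add continuous_id)).aestronglyMeasurable))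
    (integrable_comp_add ψ ψ.integrable t₀ _)
    (by
      have hc : Continuous (fun v : Fin d → ℝ => fderiv ℝ ψ (t₀ + v)) :=
        ((ψ.smooth ⊤).continuous_fderiv (by simp)).comp (continuous_const.add continuous_id)
      exact hc.aestronglyMeasurable)
    (Filter.Eventually.of_forall fun v => fun x hx => by
      have h1 : (0 : ℝ) < (1 + ‖v‖) ^ (d + 1) := by positivity
      show ‖fderiv ℝ ψ (x + v)‖ ≤ C * (2 + ‖t₀‖) ^ (d + 1) * ((1 + ‖v‖) ^ (d + 1))⁻¹
      rw [← div_eq_mul_inv, le_div_iff₀ h1]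
      · have hxv := one_add_norm_mul x v
        have hx' : ‖x‖ ≤ 1 + ‖t₀‖ := by
          have := mem_ball_iff_norm.mp hx
          have h2 := norm_sub_norm_le x t₀
          linarith
        have hpow : (1 + ‖v‖) ^ (d + 1) ≤ ((1 + ‖x‖) * (1 + ‖x + v‖)) ^ (d + 1) := by
          gcongr
        calc ‖fderiv ℝ ψ (x + v)‖ * (1 + ‖v‖) ^ (d + 1)
            ≤ ‖fderiv ℝ ψ (x + v)‖ * ((1 + ‖x‖) * (1 + ‖x + v‖)) ^ (d + 1) := by
              gcongr
          _ = (1 + ‖x‖) ^ (d + 1) * ((1 + ‖x + v‖) ^ (d + 1) * ‖fderiv ℝ ψ (x + v)‖) := by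
              rw [mul_pow]; ring
          _ ≤ (2 + ‖t₀‖) ^ (d + 1) * C := by
              have h6 := hC (x + v)
              have h3 : (1 + ‖x‖) ^ (d + 1) ≤ (2 + ‖t₀‖) ^ (d + 1) :=
                pow_le_pow_left₀ (by positivity) (by linarith) _
              have h4 : (0 : ℝ) ≤ (1 + ‖x + v‖) ^ (d + 1) * ‖fderiv ℝ ψ (x + v)‖ := by
                positivity
              exact mul_le_mul h3 h6 h4 (by positivity)
          _ = C * (2 + ‖t₀‖) ^ (d + 1) := by ring)
    (by
      have := integrable_inv_pow (d := d)
      exact ((this.const_mul _).restrict))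
    (Filter.Eventually.of_forall fun v => fun x hx => by
      have h1 : HasFDerivAt ψ (fderiv ℝ ψ (x + v)) (x + v) :=
        ψ.differentiableAt.hasFDerivAt
      have h2 : HasFDerivAt (fun y : Fin d → ℝ => y + v)
          (ContinuousLinearMap.id ℝ (Fin d → ℝ)) x := (hasFDerivAt_id x).add_const v
      simpa [Function.comp_def] using h1.comp x h2)
  exact key

lemma integrable_fderiv_comp (ψ : SchwartzMap (Fin d → ℝ) ℝ) (t : Fin d → ℝ) :
    Integrable (fun v => fderiv ℝ ψ (t + v))
      ((volume : Measure (Fin d → ℝ)).restrict (Set.Ici (0 : Fin d → ℝ))) := by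
  have h : Integrable (fun x => fderiv ℝ ψ x) (volume : Measure (Fin d → ℝ)) := by
    have := (SchwartzMap.fderivCLM ℝ (Fin d → ℝ) ℝ ψ).integrable (μ := (volume : Measure (Fin d → ℝ)))
    exact this
  exact integrable_comp_add _ h t _

/-- Partial derivative on Schwartz space. -/
def pd (i : Fin d) : SchwartzMap (Fin d → ℝ) ℝ → SchwartzMap (Fin d → ℝ) ℝ :=
  fun g => LineDeriv.lineDerivOp (Pi.single i (1 : ℝ) : Fin d → ℝ) g

lemma pderivCoord_T (i : Fin d) (ψ : SchwartzMap (Fin d → ℝ) ℝ) :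
    pderivCoord i (T ψ) = T (pd i ψ) := by
  funext t
  have h := hasFDerivAt_T ψ t
  unfold pderivCoord
  rw [h.fderiv, ContinuousLinearMap.integral_apply (integrable_fderiv_comp ψ t)]
  have h2 : T (pd i ψ) t
      = ∫ v in Set.Ici (0 : Fin d → ℝ),
          (pd i ψ) (t + v) := translate _ t
  rw [h2]
  exact integral_congr_ae (Filter.Eventually.of_forall fun v => by
    exact (SchwartzMap.lineDerivOp_apply_eq_fderiv _ _ _).symm)

lemma iterate_pderivCoord_T (i : Fin d) (k : ℕ) (ψ : SchwartzMap (Fin d → ℝ) ℝ) :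
    (pderivCoord i)^[k] (T ψ) = T ((pd i)^[k] ψ) := by
  induction k with
  | zero => rfl
  | succ k ih =>
    rw [Function.iterate_succ_apply', Function.iterate_succ_apply', ih, pderivCoord_T]

lemma foldr_T (β : Fin d → ℕ) (l : List (Fin d)) (ψ : SchwartzMap (Fin d → ℝ) ℝ) :
    l.foldr (fun i g => (pderivCoord i)^[β i] g) (T ψ)
      = T (l.foldr (fun i g => (pd i)^[β i] g) ψ) := by
  induction l with
  | nil => rfl
  | cons i l ih => rw [List.foldr_cons, List.foldr_cons, ih, iterate_pderivCoord_T]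

/-- The Schwartz function representing `∂^β φ` in the foldr order of `mixedPartial`. -/
def Psi (β : Fin d → ℕ) (φ : SchwartzMap (Fin d → ℝ) ℝ) : SchwartzMap (Fin d → ℝ) ℝ :=
  (List.finRange d).foldr (fun i g => (pd i)^[β i] g) φ

lemma mixedPartial_T (β : Fin d → ℕ) (φ : SchwartzMap (Fin d → ℝ) ℝ) :
    mixedPartial β (T φ) = T (Psi β φ) :=
  foldr_T β _ φ

section lists

variable {σ : Type*} {ι : Type*}

lemma foldr_replicate (P : ι → σ → σ) (i : ι) (k : ℕ) (x : σ) :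
    (List.replicate k i).foldr (fun j y => P j y) x = (P i)^[k] x := by
  induction k with
  | zero => rfl
  | succ k ih => rw [List.replicate_succ, List.foldr_cons, ih, Function.iterate_succ_apply']

lemma foldr_iterate_eq_flatMap (P : ι → σ → σ) (c : ι → ℕ) (l : List ι) (x : σ) :
    l.foldr (fun i y => (P i)^[c i] y) x
      = (l.flatMap fun i => List.replicate (c i) i).foldr (fun j y => P j y) x := by
  induction l with
  | nil => rfl
  | cons i l ih =>
    rw [List.foldr_cons, List.flatMap_cons, List.foldr_append, ← ih, foldr_replicate]

end lists

lemma foldr_pderiv_eq_iteratedPDeriv (L : List (Fin d)) (φ : SchwartzMap (Fin d → ℝ) ℝ) :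
    L.foldr (fun i g => pd i g) φ
      = LineDeriv.iteratedLineDerivOp
          (fun j : Fin L.length => (Pi.single (L.get j) (1 : ℝ) : Fin d → ℝ)) φ := by
  induction L with
  | nil => rw [List.foldr_nil, LineDeriv.iteratedLineDerivOp_fin_zero]
  | cons i L ih =>
    rw [List.foldr_cons, ih, LineDeriv.iteratedLineDerivOp_succ_left]
    rfl

lemma norm_Psi_le (β : Fin d → ℕ) (φ : SchwartzMap (Fin d → ℝ) ℝ) (u : Fin d → ℝ) :
    ‖Psi β φ u‖ ≤ ‖iteratedFDeriv ℝ (∑ i, β i) φ u‖ := by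
  set L : List (Fin d) := (List.finRange d).flatMap fun i => List.replicate (β i) i with hL
  have hlen : L.length = ∑ i, β i := by
    rw [hL, List.length_flatMap, Fin.sum_univ_def]
    congr 1
    exact List.map_congr_left fun i _ => by simp
  have hPsi : Psi β φ = LineDeriv.iteratedLineDerivOp
      (fun j : Fin L.length => (Pi.single (L.get j) (1 : ℝ) : Fin d → ℝ)) φ := by
    rw [Psi, foldr_iterate_eq_flatMap, ← hL, foldr_pderiv_eq_iteratedPDeriv]
  rw [hPsi, SchwartzMap.iteratedLineDerivOp_eq_iteratedFDeriv]
  have h1 := (iteratedFDeriv ℝ L.length (⇑φ) u).le_opNorm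
    (fun j : Fin L.length => Pi.single (L.get j) (1 : ℝ))
  have h2 : (∏ j : Fin L.length, ‖(Pi.single (L.get j) (1 : ℝ) : Fin d → ℝ)‖) = 1 := by
    simp [Pi.norm_single]
  rw [h2, mul_one] at h1
  rw [← hlen]
  exact h1

end TailAux

open TailAux in
/-- Lemma 3.9: for `Φ(t) = ∫_{[t,∞)} φ(s) ds` and multi-indices `|α|, |β| ≤ p`, on any set
`{t ≥ a}` one has `sup_{t ≥ a} |(1 + |t^α|) Φ^{(β)}(t)| ≤ C N_{p+2d}(φ)`. -/
theorem tail_integral_schwartz_estimate {d : ℕ} (hd : 0 < d) (p : ℕ) (α β : Fin d → ℕ)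
    (hα : ∑ i, α i ≤ p) (hβ : ∑ i, β i ≤ p) (a : Fin d → ℝ) :
    ∃ C : ℝ, ∀ φ : SchwartzMap (Fin d → ℝ) ℝ, ∀ t : Fin d → ℝ, a ≤ t →
      |(1 + |∏ i, t i ^ α i|) *
          mixedPartial β (fun s => ∫ u in {u : Fin d → ℝ | s ≤ u}, φ u) t|
        ≤ C * schwartzNorm (p + 2 * d) φ := by
  classical
  set K := p + 2 * d with hK
  set I : ℝ := ∫ u : Fin d → ℝ, ((1 + ‖u‖) ^ (d + 1))⁻¹ with hI
  have hI0 : 0 ≤ I := integral_nonneg fun u => by positivity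
  refine ⟨2 * (1 + ‖a‖) ^ p * 2 ^ K * I, fun φ t hat => ?_⟩
  set S : ℝ := (Finset.Iic (K, K)).sup (fun m => SchwartzMap.seminorm ℝ m.1 m.2) φ with hSdef
  have hS0 : 0 ≤ S := by
    rw [hSdef]
    exact apply_nonneg _ φ
  have hSN : S ≤ schwartzNorm K φ := by
    have hN0 : (0 : ℝ) ≤ schwartzNorm K φ := by
      refine Finset.sum_nonneg fun k _ => Finset.sum_nonneg fun n _ => apply_nonneg _ φ
    refine Seminorm.finset_sup_apply_le hN0 fun m hm => ?_
    rw [Finset.mem_Iic, Prod.le_def] at hm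
    calc SchwartzMap.seminorm ℝ m.1 m.2 φ
        ≤ ∑ n ∈ Finset.range (K + 1), SchwartzMap.seminorm ℝ m.1 n φ :=
          Finset.single_le_sum (fun n _ => apply_nonneg _ φ)
            (Finset.mem_range.mpr (Nat.lt_succ_of_le hm.2))
      _ ≤ schwartzNorm K φ :=
          Finset.single_le_sum
            (f := fun k => ∑ n ∈ Finset.range (K + 1), SchwartzMap.seminorm ℝ k n φ)
            (fun k _ => Finset.sum_nonneg fun n _ => apply_nonneg _ φ)
            (Finset.mem_range.mpr (Nat.lt_succ_of_le hm.1))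
  -- pointwise decay of the derivative of φ
  have hdecay : ∀ u : Fin d → ℝ,
      (1 + ‖u‖) ^ p * ‖Psi β φ u‖ ≤ 2 ^ K * S * ((1 + ‖u‖) ^ (d + 1))⁻¹ := by
    intro u
    have hr : (0 : ℝ) < (1 + ‖u‖) ^ (d + 1) := by positivity
    rw [← div_eq_mul_inv, le_div_iff₀ hr]
    have h1 := SchwartzMap.one_add_le_sup_seminorm_apply (𝕜 := ℝ) (m := (K, K))
      (k := p + d + 1) (n := ∑ i, β i) (by omega) (by omega) φ u
    calc (1 + ‖u‖) ^ p * ‖Psi β φ u‖ * (1 + ‖u‖) ^ (d + 1)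
        = (1 + ‖u‖) ^ (p + d + 1) * ‖Psi β φ u‖ := by
          rw [show p + d + 1 = p + (d + 1) by omega, pow_add]; ring
      _ ≤ (1 + ‖u‖) ^ (p + d + 1) * ‖iteratedFDeriv ℝ (∑ i, β i) φ u‖ := by
          gcongr
          exact norm_Psi_le β φ u
      _ ≤ 2 ^ K * S := h1
  -- the factor 1 + |t^α| is controlled for u ≥ t ≥ a
  have hfac : ∀ u ∈ Set.Ici t,
      1 + |∏ i, t i ^ α i| ≤ 2 * (1 + ‖a‖) ^ p * (1 + ‖u‖) ^ p := by
    intro u hu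
    set M : ℝ := (1 + ‖a‖) * (1 + ‖u‖) with hM
    have hM1 : (1 : ℝ) ≤ M := by
      rw [hM]
      nlinarith [norm_nonneg a, norm_nonneg u]
    have habs : |∏ i, t i ^ α i| ≤ M ^ p := by
      rw [Finset.abs_prod]
      have hstep : ∀ i : Fin d, |t i ^ α i| ≤ M ^ α i := by
        intro i
        rw [abs_pow]
        refine pow_le_pow_left₀ (abs_nonneg _) ?_ _
        rcases le_or_gt 0 (t i) with h | h
        · have h1 : t i ≤ u i := hu i
          have h2 : |u i| ≤ ‖u‖ := by
            simpa using norm_le_pi_norm u i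
          rw [abs_of_nonneg h]
          have : u i ≤ |u i| := le_abs_self _
          nlinarith [norm_nonneg a, norm_nonneg u]
        · have h1 : a i ≤ t i := hat i
          have h2 : |a i| ≤ ‖a‖ := by
            simpa using norm_le_pi_norm a i
          have h3 : |t i| ≤ |a i| := by
            rw [abs_of_neg h, abs_of_nonpos (by linarith : a i ≤ 0)]
            linarith
          nlinarith [norm_nonneg a, norm_nonneg u]
      calc ∏ i, |t i ^ α i| ≤ ∏ i, M ^ α i :=
            Finset.prod_le_prod (fun i _ => abs_nonneg _) (fun i _ => hstep i)
        _ = M ^ (∑ i, α i) := by rw [← Finset.prod_pow_eq_pow_sum]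
        _ ≤ M ^ p := pow_le_pow_right₀ hM1 hα
    have h1M : (1 : ℝ) ≤ M ^ p := one_le_pow₀ hM1
    calc 1 + |∏ i, t i ^ α i| ≤ M ^ p + M ^ p := by linarith
      _ = 2 * (1 + ‖a‖) ^ p * (1 + ‖u‖) ^ p := by rw [hM, mul_pow]; ring
  -- rewrite the mixed partial
  have hT : mixedPartial β (fun s => ∫ u in {u : Fin d → ℝ | s ≤ u}, φ u) t
      = T (Psi β φ) t := by
    have : (fun s => ∫ u in {u : Fin d → ℝ | s ≤ u}, φ u) = T φ := rfl
    rw [this, mixedPartial_T]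
  rw [hT]
  have hA0 : (0 : ℝ) ≤ 1 + |∏ i, t i ^ α i| := by positivity
  have step1 : |(1 + |∏ i, t i ^ α i|) * T (Psi β φ) t|
      ≤ (1 + |∏ i, t i ^ α i|) * ∫ u in Set.Ici t, ‖Psi β φ u‖ := by
    rw [abs_mul, abs_of_nonneg hA0]
    gcongr
    · show |∫ u in Set.Ici t, Psi β φ u| ≤ _
      rw [← Real.norm_eq_abs]
      exact norm_integral_le_integral_norm _
  have step2 : (1 + |∏ i, t i ^ α i|) * ∫ u in Set.Ici t, ‖Psi β φ u‖
      = ∫ u in Set.Ici t, (1 + |∏ i, t i ^ α i|) * ‖Psi β φ u‖ := by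
    rw [integral_const_mul]
  have hint_lhs : Integrable (fun u => (1 + |∏ i, t i ^ α i|) * ‖Psi β φ u‖)
      ((volume : Measure (Fin d → ℝ)).restrict (Set.Ici t)) :=
    (((Psi β φ).integrable (μ := (volume : Measure (Fin d → ℝ)))).norm.const_mul _).restrict
  have hint_rhs : Integrable
      (fun u : Fin d → ℝ => 2 * (1 + ‖a‖) ^ p * (2 ^ K * S) * ((1 + ‖u‖) ^ (d + 1))⁻¹)
      ((volume : Measure (Fin d → ℝ)).restrict (Set.Ici t)) :=
    ((integrable_inv_pow (d := d)).const_mul _).restrict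
  have step3 : ∫ u in Set.Ici t, (1 + |∏ i, t i ^ α i|) * ‖Psi β φ u‖
      ≤ ∫ u in Set.Ici t,
          2 * (1 + ‖a‖) ^ p * (2 ^ K * S) * ((1 + ‖u‖) ^ (d + 1))⁻¹ := by
    refine setIntegral_mono_on hint_lhs hint_rhs measurableSet_Ici fun u hu => ?_
    calc (1 + |∏ i, t i ^ α i|) * ‖Psi β φ u‖
        ≤ (2 * (1 + ‖a‖) ^ p * (1 + ‖u‖) ^ p) * ‖Psi β φ u‖ :=
          mul_le_mul_of_nonneg_right (hfac u hu) (norm_nonneg _)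
      _ = 2 * (1 + ‖a‖) ^ p * ((1 + ‖u‖) ^ p * ‖Psi β φ u‖) := by ring
      _ ≤ 2 * (1 + ‖a‖) ^ p * (2 ^ K * S * ((1 + ‖u‖) ^ (d + 1))⁻¹) :=
          mul_le_mul_of_nonneg_left (hdecay u) (by positivity)
      _ = 2 * (1 + ‖a‖) ^ p * (2 ^ K * S) * ((1 + ‖u‖) ^ (d + 1))⁻¹ := by ring
  have step4 : ∫ u in Set.Ici t,
        2 * (1 + ‖a‖) ^ p * (2 ^ K * S) * ((1 + ‖u‖) ^ (d + 1))⁻¹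
      ≤ 2 * (1 + ‖a‖) ^ p * (2 ^ K * S) * I := by
    rw [integral_const_mul, hI]
    refine mul_le_mul_of_nonneg_left ?_ (by positivity)
    exact setIntegral_le_integral (integrable_inv_pow (d := d))
      (Filter.Eventually.of_forall fun u => by positivity)
  have step5 : 2 * (1 + ‖a‖) ^ p * (2 ^ K * S) * I
      ≤ 2 * (1 + ‖a‖) ^ p * 2 ^ K * I * schwartzNorm K φ := by
    have h : 2 * (1 + ‖a‖) ^ p * (2 ^ K * S) * I
        = (2 * (1 + ‖a‖) ^ p * 2 ^ K * I) * S := by ring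
    rw [h]
    exact mul_le_mul_of_nonneg_left hSN (by positivity)
  linarith [step1, step2.le, step3, step4, step5]
end
end

section
/- Let X be a d-parameter Lévy field and let α > 0. If there exists t ∈ (0,∞)^d (all coordinates strictly positive) such that E(|X_t|^α) < +∞, then E(|X_t|^α) < +∞ for every t ∈ ℝ₊^d. -/
open MeasureTheory ProbabilityTheory Filter

noncomputable section

/-- The increment `Δ_a^b X(ω) = Σ_{ε ∈ {0,1}^d} (-1)^{|ε|} X_{c_ε(a,b)}(ω)`, where
`c_ε(a,b)_i = a_i` if `ε_i = 1` and `b_i` otherwise. -/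
def boxIncrement {Ω : Type*} {d : ℕ} (X : (Fin d → ℝ) → Ω → ℝ) (a b : Fin d → ℝ)
    (ω : Ω) : ℝ :=
  ∑ ε : Fin d → Bool, (-1 : ℝ) ^ (Finset.univ.filter fun i => ε i).card *
    X (fun i => if ε i then a i else b i) ω

/-- The half-open box `]a, b]` in `ℝ^d`. -/
def boxIoc {d : ℕ} (a b : Fin d → ℝ) : Set (Fin d → ℝ) :=
  {t | ∀ i, a i < t i ∧ t i ≤ b i}

/-- A `d`-parameter Lévy field: a.s. lamp sample paths vanishing on the boundary of `ℝ₊^d`,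
continuity in probability, and independent, stationary increments over disjoint boxes. -/
structure IsLevyField {Ω : Type*} [MeasurableSpace Ω] {d : ℕ} (P : Measure Ω)
    (X : (Fin d → ℝ) → Ω → ℝ) : Prop where
  measurable : ∀ t, Measurable (X t)
  lamp : ∀ᵐ ω ∂P,
    (∀ (R : Fin d → Bool) (t : Fin d → ℝ), 0 ≤ t →
      ∃ l : ℝ, Tendsto (fun u => X u ω)
        (nhdsWithin t {u : Fin d → ℝ | 0 ≤ u ∧ ∀ i, if R i then t i ≤ u i else u i < t i})
        (nhds l)) ∧
    (∀ t : Fin d → ℝ, 0 ≤ t →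
      Tendsto (fun u => X u ω)
        (nhdsWithin t {u : Fin d → ℝ | 0 ≤ u ∧ t ≤ u}) (nhds (X t ω))) ∧
    (∀ t : Fin d → ℝ, 0 ≤ t → (∃ i, t i = 0) → X t ω = 0)
  stochContinuous : ∀ t : Fin d → ℝ, 0 ≤ t → ∀ ε : ℝ, 0 < ε →
    Tendsto (fun s => P {ω | ε ≤ |X s ω - X t ω|})
      (nhdsWithin t {s : Fin d → ℝ | 0 ≤ s}) (nhds 0)
  indepIncrements : ∀ (n : ℕ) (a b : Fin n → Fin d → ℝ),
    (∀ k, 0 ≤ a k ∧ a k ≤ b k) →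
    (Pairwise fun k l => Disjoint (boxIoc (a k) (b k)) (boxIoc (a l) (b l))) →
    iIndepFun (fun k => boxIncrement X (a k) (b k)) P
  statIncrements : ∀ a b s : Fin d → ℝ, 0 ≤ a → a ≤ b → 0 ≤ a + s →
    Measure.map (boxIncrement X a b) P = Measure.map (boxIncrement X (a + s) (b + s)) P

section LevyAux
set_option linter.unusedSectionVars false
set_option linter.unusedVariables false
set_option linter.unnecessarySeqFocus false
set_option linter.unusedTactic false

variable {Ω : Type*} [MeasurableSpace Ω] {d : ℕ} {P : Measure Ω}
  {X : (Fin d → ℝ) → Ω → ℝ}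

lemma measurable_boxIncrement (hX : ∀ t, Measurable (X t)) (a b : Fin d → ℝ) :
    Measurable (boxIncrement X a b) := by
  unfold boxIncrement
  exact Finset.measurable_sum _ fun ε _ => (hX _).const_mul _

lemma boxIncrement_zero_ae (hX : IsLevyField P X) (b : Fin d → ℝ) (hb : 0 ≤ b) :
    boxIncrement X 0 b =ᵐ[P] X b := by
  filter_upwards [hX.lamp] with ω hω
  obtain ⟨-, -, hzero⟩ := hω
  unfold boxIncrement
  rw [Finset.sum_eq_single (fun _ => false)]
  · simp
  · intro ε _ hne
    have hex : ∃ i, ε i = true := by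
      by_contra h
      push_neg at h
      exact hne (funext fun i => by simpa using h i)
    obtain ⟨i0, hi0⟩ := hex
    have h0 : X (fun i => if ε i then (0 : Fin d → ℝ) i else b i) ω = 0 := by
      apply hzero
      · intro i
        by_cases h : ε i
        · simp [h]
        · simpa [h] using hb i
      · exact ⟨i0, by simp [hi0]⟩
    rw [h0, mul_zero]
  · intro h; exact absurd (Finset.mem_univ _) h

lemma sign_eq_prod (ε : Fin d → Bool) :
    ((-1 : ℝ) ^ (Finset.univ.filter fun i => ε i).card) = ∏ i, (if ε i then (-1:ℝ) else 1) := by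
  rw [Finset.prod_ite, Finset.prod_const, Finset.prod_const, one_pow, mul_one]

lemma flip_prod (ε : Fin d → Bool) (j : Fin d) :
    (∏ i, (if Function.update ε j (!ε j) i then (-1:ℝ) else 1))
      = - ∏ i, (if ε i then (-1:ℝ) else 1) := by
  have h1 : (fun i => (if Function.update ε j (!ε j) i then (-1:ℝ) else 1))
      = Function.update (fun i => (if ε i then (-1:ℝ) else 1)) j
          (-(if ε j then (-1:ℝ) else 1)) := by
    funext i
    rcases eq_or_ne i j with rfl | hij
    · cases h : ε i <;> simp [h]
    · simp [Function.update_of_ne hij]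
  calc (∏ i, (if Function.update ε j (!ε j) i then (-1:ℝ) else 1))
      = ∏ i, Function.update (fun i => (if ε i then (-1:ℝ) else 1)) j
          (-(if ε j then (-1:ℝ) else 1)) i := by rw [h1]
    _ = (-(if ε j then (-1:ℝ) else 1)) * ∏ i ∈ Finset.univ.erase j, (if ε i then (-1:ℝ) else 1) := by
        rw [← Finset.mul_prod_erase Finset.univ _ (Finset.mem_univ j)]
        congr 1
        · simp [Function.update_self]
        · exact Finset.prod_congr rfl fun i hi => by
            simp [Function.update_of_ne (Finset.mem_erase.1 hi).1]
    _ = - ∏ i, (if ε i then (-1:ℝ) else 1) := by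
        rw [← Finset.mul_prod_erase Finset.univ _ (Finset.mem_univ j)]
        ring

lemma boxIncrement_split (X : (Fin d → ℝ) → Ω → ℝ) (a b : Fin d → ℝ) (j : Fin d) (m : ℝ)
    (ω : Ω) :
    boxIncrement X a b ω =
      boxIncrement X a (Function.update b j m) ω
        + boxIncrement X (Function.update a j m) b ω := by
  classical
  unfold boxIncrement
  simp only [sign_eq_prod]
  have key : ∑ ε : Fin d → Bool,
      ((∏ i, (if ε i then (-1:ℝ) else 1)) *
        (X (fun i => if ε i then a i else Function.update b j m i) ω
          + X (fun i => if ε i then Function.update a j m i else b i) ω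
          - X (fun i => if ε i then a i else b i) ω)) = 0 := by
    apply Finset.sum_ninvolution (g := fun ε => Function.update ε j (!ε j))
    · intro ε
      have hs := flip_prod ε j
      set ε' := Function.update ε j (!ε j) with hε'
      have hε'j : ε' j = !ε j := Function.update_self _ _ _
      have hε'i : ∀ i, i ≠ j → ε' i = ε i := fun i hi => Function.update_of_ne hi _ _
      cases hj : ε j
      · -- ε j = false
        have hP2 : (fun i => if ε i then Function.update a j m i else b i)
            = (fun i => if ε i then a i else b i) := by
          funext i
          rcases eq_or_ne i j with rfl | hij
          · simp [hj]
          · simp [Function.update_of_ne hij]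
        have hP1 : (fun i => if ε i then a i else Function.update b j m i)
            = Function.update (fun i => if ε i then a i else b i) j m := by
          funext i
          rcases eq_or_ne i j with rfl | hij
          · simp [hj]
          · simp [Function.update_of_ne hij]
        have hP1' : (fun i => if ε' i then a i else Function.update b j m i)
            = (fun i => if ε' i then a i else b i) := by
          funext i
          rcases eq_or_ne i j with rfl | hij
          · simp [hε'j, hj]
          · simp [Function.update_of_ne hij]
        have hP2' : (fun i => if ε' i then Function.update a j m i else b i)
            = Function.update (fun i => if ε i then a i else b i) j m := by
          funext i
          rcases eq_or_ne i j with rfl | hij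
          · simp [hε'j, hj]
          · simp [hε'i i hij, Function.update_of_ne hij]
        have hP' : (fun i => if ε' i then a i else b i)
            = Function.update (fun i => if ε i then a i else b i) j m → True := fun _ => trivial
        -- remaining: (fun i => if ε' i then a i else b i) relates? we don't need it to be update;
        -- terms: f ε = s * (X(upd) + X(P) - X(P)) = s * X(upd)
        -- f ε' = -s * (X(Pε') + X(upd) - X(Pε')) = -s * X(upd)
        rw [hP1, hP2, hP1', hP2', hs]
        ring
      · -- ε j = true
        have hP1 : (fun i => if ε i then a i else Function.update b j m i)
            = (fun i => if ε i then a i else b i) := by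
          funext i
          rcases eq_or_ne i j with rfl | hij
          · simp [hj]
          · simp [Function.update_of_ne hij]
        have hP2 : (fun i => if ε i then Function.update a j m i else b i)
            = Function.update (fun i => if ε i then a i else b i) j m := by
          funext i
          rcases eq_or_ne i j with rfl | hij
          · simp [hj]
          · simp [Function.update_of_ne hij]
        have hP1' : (fun i => if ε' i then a i else Function.update b j m i)
            = Function.update (fun i => if ε i then a i else b i) j m := by
          funext i
          rcases eq_or_ne i j with rfl | hij
          · simp [hε'j, hj]
          · simp [hε'i i hij, Function.update_of_ne hij]
        have hP2' : (fun i => if ε' i then Function.update a j m i else b i)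
            = (fun i => if ε' i then a i else b i) := by
          funext i
          rcases eq_or_ne i j with rfl | hij
          · simp [hε'j, hj]
          · simp [Function.update_of_ne hij]
        rw [hP1, hP2, hP1', hP2', hs]
        ring
    · intro ε _
      intro h
      have := congrFun h j
      simp at this
    · intro ε; exact Finset.mem_univ _
    · intro ε
      funext i
      rcases eq_or_ne i j with rfl | hij
      · simp
      · simp [Function.update_of_ne hij]
  have expand := key
  rw [Finset.sum_congr rfl (fun ε _ => mul_sub (∏ i, (if ε i then (-1:ℝ) else 1)) _ _)] at expand
  rw [Finset.sum_sub_distrib] at expand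
  rw [Finset.sum_congr rfl (fun ε _ => mul_add (∏ i, (if ε i then (-1:ℝ) else 1)) _ _)] at expand
  rw [Finset.sum_add_distrib] at expand
  linarith [expand]

lemma abs_add_rpow_le {α : ℝ} (hα : 0 < α) (x y : ℝ) :
    |x + y| ^ α ≤ 2 ^ α * (|x| ^ α + |y| ^ α) := by
  have h1 : |x + y| ≤ 2 * max |x| |y| := by
    calc |x + y| ≤ |x| + |y| := abs_add_le x y
      _ ≤ max |x| |y| + max |x| |y| := add_le_add (le_max_left _ _) (le_max_right _ _)
      _ = 2 * max |x| |y| := by ring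
  have h0 : (0:ℝ) ≤ max |x| |y| := le_trans (abs_nonneg x) (le_max_left _ _)
  calc |x + y| ^ α ≤ (2 * max |x| |y|) ^ α :=
        Real.rpow_le_rpow (abs_nonneg _) h1 hα.le
    _ = 2 ^ α * (max |x| |y|) ^ α := Real.mul_rpow (by norm_num) h0
    _ ≤ 2 ^ α * (|x| ^ α + |y| ^ α) := by
        gcongr 2 ^ α * ?_
        rcases max_cases |x| |y| with ⟨h, _⟩ | ⟨h, _⟩ <;> rw [h]
        · exact le_add_of_nonneg_right (Real.rpow_nonneg (abs_nonneg _) _)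
        · exact le_add_of_nonneg_left (Real.rpow_nonneg (abs_nonneg _) _)

/-- If `Y` and `Z` are independent with `E|Y+Z|^α < ∞`, then `E|Y|^α < ∞`. -/
lemma indepFun_moment_summand {Ω : Type*} [MeasurableSpace Ω] {P : Measure Ω}
    [IsProbabilityMeasure P] {Y Z : Ω → ℝ} (hY : Measurable Y) (hZ : Measurable Z)
    (hind : IndepFun Y Z P) {α : ℝ} (hα : 0 < α)
    (hfin : ∫⁻ ω, ENNReal.ofReal (|Y ω + Z ω| ^ α) ∂P < ⊤) :
    ∫⁻ ω, ENNReal.ofReal (|Y ω| ^ α) ∂P < ⊤ := by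
  set μ := P.map Y with hμ
  set ν := P.map Z with hν
  haveI : IsProbabilityMeasure μ := Measure.isProbabilityMeasure_map hY.aemeasurable
  haveI : IsProbabilityMeasure ν := Measure.isProbabilityMeasure_map hZ.aemeasurable
  have hg : Measurable fun p : ℝ × ℝ => ENNReal.ofReal (|p.1 + p.2| ^ α) := by
    apply ENNReal.measurable_ofReal.comp
    exact ((measurable_fst.add measurable_snd).abs).pow measurable_const
  have hpair : Measurable fun ω => (Y ω, Z ω) := hY.prodMk hZ
  have hmap : P.map (fun ω => (Y ω, Z ω)) = μ.prod ν :=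
    (indepFun_iff_map_prod_eq_prod_map_map hY.aemeasurable hZ.aemeasurable).1 hind
  have h1 : ∫⁻ ω, ENNReal.ofReal (|Y ω + Z ω| ^ α) ∂P
      = ∫⁻ z, ∫⁻ y, ENNReal.ofReal (|y + z| ^ α) ∂μ ∂ν := by
    rw [← lintegral_map hg hpair, hmap, lintegral_prod_symm' _ hg]
  have h2 : ∀ᵐ z ∂ν, (∫⁻ y, ENNReal.ofReal (|y + z| ^ α) ∂μ) < ⊤ := by
    apply ae_lt_top
    · exact Measurable.lintegral_prod_right (f := fun z y => ENNReal.ofReal (|y + z| ^ α))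
        (by apply ENNReal.measurable_ofReal.comp
            exact ((measurable_snd.add measurable_fst).abs).pow measurable_const)
    · rw [← h1]; exact hfin.ne
  haveI : (MeasureTheory.ae ν).NeBot := ae_neBot.2 (IsProbabilityMeasure.ne_zero ν)
  obtain ⟨z₀, hz₀⟩ := h2.exists
  have hbound : ∀ y : ℝ, ENNReal.ofReal (|y| ^ α)
      ≤ ENNReal.ofReal (2 ^ α) *
        (ENNReal.ofReal (|y + z₀| ^ α) + ENNReal.ofReal (|z₀| ^ α)) := by
    intro y
    have hy : |y| ^ α ≤ 2 ^ α * (|y + z₀| ^ α + |(-z₀)| ^ α) := by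
      have := abs_add_rpow_le hα (y + z₀) (-z₀)
      simpa using this
    calc ENNReal.ofReal (|y| ^ α)
        ≤ ENNReal.ofReal (2 ^ α * (|y + z₀| ^ α + |(-z₀)| ^ α)) := ENNReal.ofReal_le_ofReal hy
      _ = ENNReal.ofReal (2 ^ α) *
          (ENNReal.ofReal (|y + z₀| ^ α) + ENNReal.ofReal (|z₀| ^ α)) := by
          rw [ENNReal.ofReal_mul (Real.rpow_nonneg (by norm_num) _),
            ENNReal.ofReal_add (Real.rpow_nonneg (abs_nonneg _) _)
              (Real.rpow_nonneg (abs_nonneg _) _), abs_neg]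
  have h3 : ∫⁻ ω, ENNReal.ofReal (|Y ω| ^ α) ∂P = ∫⁻ y, ENNReal.ofReal (|y| ^ α) ∂μ :=
    (lintegral_map (f := fun y : ℝ => ENNReal.ofReal (|y| ^ α))
      (ENNReal.measurable_ofReal.comp (measurable_abs.pow measurable_const)) hY).symm
  rw [h3]
  calc ∫⁻ y, ENNReal.ofReal (|y| ^ α) ∂μ
      ≤ ∫⁻ y, ENNReal.ofReal (2 ^ α) *
          (ENNReal.ofReal (|y + z₀| ^ α) + ENNReal.ofReal (|z₀| ^ α)) ∂μ :=
        lintegral_mono fun y => hbound y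
    _ = ENNReal.ofReal (2 ^ α) *
          ((∫⁻ y, ENNReal.ofReal (|y + z₀| ^ α) ∂μ) + ENNReal.ofReal (|z₀| ^ α)) := by
        rw [lintegral_const_mul]
        · congr 1
          rw [lintegral_add_right _ measurable_const, lintegral_const, measure_univ, mul_one]
        · exact ((ENNReal.measurable_ofReal.comp
            ((measurable_id.add_const z₀).abs.pow measurable_const)).add measurable_const)
    _ < ⊤ := by
        apply ENNReal.mul_lt_top ENNReal.ofReal_lt_top
        exact (ENNReal.add_lt_top.2 ⟨hz₀, ENNReal.ofReal_lt_top⟩)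


lemma lintegral_boxIncrement_shift (hX : IsLevyField P X) (a b s : Fin d → ℝ)
    (ha : 0 ≤ a) (hab : a ≤ b) (has : 0 ≤ a + s) (g : ℝ → ENNReal) (hg : Measurable g) :
    ∫⁻ ω, g (boxIncrement X a b ω) ∂P = ∫⁻ ω, g (boxIncrement X (a + s) (b + s) ω) ∂P := by
  rw [← lintegral_map hg (measurable_boxIncrement hX.measurable a b),
    ← lintegral_map hg (measurable_boxIncrement hX.measurable (a + s) (b + s)),
    hX.statIncrements a b s ha hab has]

/-- Restriction step: lowering one coordinate preserves finiteness of the moment. -/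
lemma moment_update (hP : IsProbabilityMeasure P) (hX : IsLevyField P X) {α : ℝ} (hα : 0 < α)
    {b : Fin d → ℝ} (hb : 0 ≤ b) (j : Fin d) {m : ℝ} (hm0 : 0 ≤ m) (hmb : m ≤ b j)
    (hfin : ∫⁻ ω, ENNReal.ofReal (|X b ω| ^ α) ∂P < ⊤) :
    ∫⁻ ω, ENNReal.ofReal (|X (Function.update b j m) ω| ^ α) ∂P < ⊤ := by
  classical
  set b' := Function.update b j m with hb'def
  set a' := Function.update (0 : Fin d → ℝ) j m with ha'def
  set Y := boxIncrement X 0 b' with hYdef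
  set Z := boxIncrement X a' b with hZdef
  have hb' : 0 ≤ b' := by
    intro i
    rcases eq_or_ne i j with rfl | hij
    · simpa [hb'def] using hm0
    · simpa [hb'def, Function.update_of_ne hij] using hb i
  have hsplit : ∀ ω, boxIncrement X 0 b ω = Y ω + Z ω := fun ω =>
    boxIncrement_split X 0 b j m ω
  -- independence of Y and Z
  have hind : IndepFun Y Z P := by
    have hcond : ∀ k : Fin 2, 0 ≤ (![0, a'] : Fin 2 → Fin d → ℝ) k ∧
        (![0, a'] : Fin 2 → Fin d → ℝ) k ≤ (![b', b] : Fin 2 → Fin d → ℝ) k := by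
      intro k
      fin_cases k
      · exact ⟨le_refl _, by simpa using hb'⟩
      · refine ⟨?_, ?_⟩
        · intro i
          rcases eq_or_ne i j with rfl | hij
          · simpa [ha'def] using hm0
          · simp [ha'def, Function.update_of_ne hij]
        · intro i
          rcases eq_or_ne i j with rfl | hij
          · simpa [ha'def] using hmb
          · simpa [ha'def, Function.update_of_ne hij] using hb i
    have hdisj0 : Disjoint (boxIoc (0 : Fin d → ℝ) b') (boxIoc a' b) := by
      rw [Set.disjoint_left]
      intro x hx1 hx2
      have h1 : x j ≤ m := by simpa [hb'def] using (hx1 j).2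
      have h2 : m < x j := by simpa [ha'def] using (hx2 j).1
      exact absurd h1 (not_le.2 h2)
    have hdisj : Pairwise fun k l : Fin 2 =>
        Disjoint (boxIoc ((![0, a'] : Fin 2 → Fin d → ℝ) k) ((![b', b] : Fin 2 → Fin d → ℝ) k))
          (boxIoc ((![0, a'] : Fin 2 → Fin d → ℝ) l) ((![b', b] : Fin 2 → Fin d → ℝ) l)) := by
      intro k l hkl
      fin_cases k <;> fin_cases l <;> simp_all <;>
        first
          | exact hdisj0
          | exact hdisj0.symm
    have h := hX.indepIncrements 2 ![0, a'] ![b', b] hcond hdisj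
    have h2 := h.indepFun (i := 0) (j := 1) (by decide)
    simpa using h2
  have hYmeas : Measurable Y := measurable_boxIncrement hX.measurable _ _
  have hZmeas : Measurable Z := measurable_boxIncrement hX.measurable _ _
  have hfin' : ∫⁻ ω, ENNReal.ofReal (|Y ω + Z ω| ^ α) ∂P < ⊤ := by
    have hae : (fun ω => Y ω + Z ω) =ᵐ[P] X b := by
      filter_upwards [boxIncrement_zero_ae hX b hb] with ω h1
      rw [← hsplit ω, h1]
    have : ∫⁻ ω, ENNReal.ofReal (|Y ω + Z ω| ^ α) ∂P
        = ∫⁻ ω, ENNReal.ofReal (|X b ω| ^ α) ∂P :=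
      lintegral_congr_ae (hae.mono fun ω h => by dsimp only at h ⊢; rw [h])
    rw [this]; exact hfin
  have hYfin := indepFun_moment_summand hYmeas hZmeas hind hα hfin'
  have hae' := boxIncrement_zero_ae hX b' hb'
  have he : (fun ω => ENNReal.ofReal (|Y ω| ^ α))
      =ᵐ[P] fun ω => ENNReal.ofReal (|X b' ω| ^ α) :=
    hae'.mono fun ω h => by simp only [hYdef, h]
  have : ∫⁻ ω, ENNReal.ofReal (|X b' ω| ^ α) ∂P
      = ∫⁻ ω, ENNReal.ofReal (|Y ω| ^ α) ∂P :=
    (lintegral_congr_ae he).symm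
  rw [this]
  exact hYfin

/-- Extension step: increasing coordinate `j` by `m` preserves finiteness of the moment,
provided the moment at `update b j m` is finite. -/
lemma moment_extend (hP : IsProbabilityMeasure P) (hX : IsLevyField P X) {α : ℝ} (hα : 0 < α)
    {b : Fin d → ℝ} (hb : 0 ≤ b) (j : Fin d) {m : ℝ} (hm0 : 0 ≤ m)
    (hfin : ∫⁻ ω, ENNReal.ofReal (|X b ω| ^ α) ∂P < ⊤)
    (hfin2 : ∫⁻ ω, ENNReal.ofReal (|X (Function.update b j m) ω| ^ α) ∂P < ⊤) :
    ∫⁻ ω, ENNReal.ofReal (|X (Function.update b j (b j + m)) ω| ^ α) ∂P < ⊤ := by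
  classical
  set B := Function.update b j (b j + m) with hBdef
  set a' := Function.update (0 : Fin d → ℝ) j (b j) with ha'def
  set c := Function.update b j m with hcdef
  have hB0 : 0 ≤ B := by
    intro i
    rcases eq_or_ne i j with rfl | hij
    · simpa [hBdef] using add_nonneg (hb i) hm0
    · simpa [hBdef, Function.update_of_ne hij] using hb i
  have hc0 : 0 ≤ c := by
    intro i
    rcases eq_or_ne i j with rfl | hij
    · simpa [hcdef] using hm0
    · simpa [hcdef, Function.update_of_ne hij] using hb i
  set g : ℝ → ENNReal := fun x => ENNReal.ofReal (|x| ^ α) with hgdef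
  have hg : Measurable g :=
    ENNReal.measurable_ofReal.comp (measurable_abs.pow measurable_const)
  -- split ]0,B] at coordinate j at value b j
  have hsplit : ∀ ω, boxIncrement X 0 B ω
      = boxIncrement X 0 b ω + boxIncrement X a' B ω := by
    intro ω
    have h := boxIncrement_split X 0 B j (b j) ω
    have hupd : Function.update B j (b j) = b := by
      funext i
      rcases eq_or_ne i j with rfl | hij
      · simp
      · simp [hBdef, Function.update_of_ne hij]
    rw [hupd] at h
    exact h
  -- the translated increment has the law of `boxIncrement X 0 c`
  have hshift : ∫⁻ ω, g (boxIncrement X a' B ω) ∂P = ∫⁻ ω, g (boxIncrement X 0 c ω) ∂P := by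
    have h0c : (0 : Fin d → ℝ) ≤ c := hc0
    have ha'0 : (0 : Fin d → ℝ) ≤ 0 + a' := by
      intro i
      rcases eq_or_ne i j with rfl | hij
      · simpa [ha'def] using hb i
      · simp [ha'def, Function.update_of_ne hij]
    have heq := lintegral_boxIncrement_shift hX 0 c a' (le_refl 0) h0c ha'0 g hg
    have h1 : (0 : Fin d → ℝ) + a' = a' := by simp
    have h2 : c + a' = B := by
      funext i
      rcases eq_or_ne i j with rfl | hij
      · simp [hcdef, ha'def, hBdef, add_comm]
      · simp [hcdef, ha'def, hBdef, Function.update_of_ne hij]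
    rw [h1, h2] at heq
    exact heq.symm
  -- now assemble
  have key : ∫⁻ ω, g (X B ω) ∂P
      ≤ ENNReal.ofReal (2 ^ α) *
        ((∫⁻ ω, g (X b ω) ∂P) + ∫⁻ ω, g (boxIncrement X 0 c ω) ∂P) := by
    have hae1 : X B =ᵐ[P] fun ω => boxIncrement X 0 b ω + boxIncrement X a' B ω := by
      filter_upwards [boxIncrement_zero_ae hX B hB0] with ω h1
      rw [← h1, hsplit ω]
    have step1 : ∫⁻ ω, g (X B ω) ∂P
        = ∫⁻ ω, g (boxIncrement X 0 b ω + boxIncrement X a' B ω) ∂P :=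
      lintegral_congr_ae (hae1.mono fun ω h => by dsimp only at h ⊢; rw [h])
    have hbnd : ∀ ω, g (boxIncrement X 0 b ω + boxIncrement X a' B ω)
        ≤ ENNReal.ofReal (2 ^ α) *
          (g (boxIncrement X 0 b ω) + g (boxIncrement X a' B ω)) := by
      intro ω
      have h := abs_add_rpow_le hα (boxIncrement X 0 b ω) (boxIncrement X a' B ω)
      calc g (boxIncrement X 0 b ω + boxIncrement X a' B ω)
          ≤ ENNReal.ofReal (2 ^ α * (|boxIncrement X 0 b ω| ^ α + |boxIncrement X a' B ω| ^ α)) :=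
            ENNReal.ofReal_le_ofReal h
        _ = ENNReal.ofReal (2 ^ α) *
            (g (boxIncrement X 0 b ω) + g (boxIncrement X a' B ω)) := by
            rw [ENNReal.ofReal_mul (Real.rpow_nonneg (by norm_num) _),
              ENNReal.ofReal_add (Real.rpow_nonneg (abs_nonneg _) _)
                (Real.rpow_nonneg (abs_nonneg _) _)]
    have hmeas1 : Measurable fun ω => g (boxIncrement X 0 b ω) :=
      hg.comp (measurable_boxIncrement hX.measurable 0 b)
    have hmeas2 : Measurable fun ω => g (boxIncrement X a' B ω) :=
      hg.comp (measurable_boxIncrement hX.measurable a' B)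
    have I1 : ∫⁻ ω, g (boxIncrement X 0 b ω) ∂P = ∫⁻ ω, g (X b ω) ∂P :=
      lintegral_congr_ae ((boxIncrement_zero_ae hX b hb).mono fun ω h => by
        dsimp only at h ⊢; rw [h])
    calc ∫⁻ ω, g (X B ω) ∂P
        = ∫⁻ ω, g (boxIncrement X 0 b ω + boxIncrement X a' B ω) ∂P := step1
      _ ≤ ∫⁻ ω, ENNReal.ofReal (2 ^ α) *
            (g (boxIncrement X 0 b ω) + g (boxIncrement X a' B ω)) ∂P :=
          lintegral_mono hbnd
      _ = ENNReal.ofReal (2 ^ α) *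
          ((∫⁻ ω, g (boxIncrement X 0 b ω) ∂P) + ∫⁻ ω, g (boxIncrement X a' B ω) ∂P) := by
          rw [lintegral_const_mul (f := fun ω => g (boxIncrement X 0 b ω) + g (boxIncrement X a' B ω)) _ (hmeas1.add hmeas2), lintegral_add_left hmeas1]
      _ = ENNReal.ofReal (2 ^ α) *
          ((∫⁻ ω, g (X b ω) ∂P) + ∫⁻ ω, g (boxIncrement X 0 c ω) ∂P) := by
          rw [I1, hshift]
  have hcf : ∫⁻ ω, g (boxIncrement X 0 c ω) ∂P < ⊤ := by
    have : ∫⁻ ω, g (boxIncrement X 0 c ω) ∂P = ∫⁻ ω, g (X c ω) ∂P :=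
      lintegral_congr_ae ((boxIncrement_zero_ae hX c hc0).mono fun ω h => by
        dsimp only at h ⊢; rw [h])
    rw [this]; exact hfin2
  refine lt_of_le_of_lt key ?_
  exact ENNReal.mul_lt_top ENNReal.ofReal_lt_top
    (ENNReal.add_lt_top.2 ⟨hfin, hcf⟩)



theorem levyField_moment_time_independent'
    (hP : IsProbabilityMeasure P)
    {d : ℕ} (hd : 0 < d) (X : (Fin d → ℝ) → Ω → ℝ) (hX : IsLevyField P X)
    (α : ℝ) (hα : 0 < α) (t₀ : Fin d → ℝ) (ht₀ : ∀ i, 0 < t₀ i)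
    (hmom : ∫⁻ ω, ENNReal.ofReal (|X t₀ ω| ^ α) ∂P < ⊤) :
    ∀ t : Fin d → ℝ, 0 ≤ t → ∫⁻ ω, ENNReal.ofReal (|X t ω| ^ α) ∂P < ⊤ := by
  classical
  intro t ht
  obtain ⟨n, hn1, hn⟩ : ∃ n : ℕ, 1 ≤ n ∧ ∀ i, t i ≤ (n : ℝ) * t₀ i := by
    have h : ∀ i, ∃ k : ℕ, t i / t₀ i ≤ (k : ℝ) := fun i => exists_nat_ge _
    choose f hf using h
    refine ⟨max 1 (Finset.univ.sup f), le_max_left _ _, fun i => ?_⟩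
    have h1 : t i ≤ (f i : ℝ) * t₀ i := by
      have := hf i
      rw [div_le_iff₀ (ht₀ i)] at this
      linarith [this]
    refine h1.trans ?_
    have h2 : ((f i : ℝ)) ≤ ((max 1 (Finset.univ.sup f) : ℕ) : ℝ) := by
      exact_mod_cast (Finset.le_sup (Finset.mem_univ i)).trans
        (le_max_right 1 (Finset.univ.sup f))
    exact mul_le_mul_of_nonneg_right h2 (ht₀ i).le
  -- Step 1: moments are finite at the grid points
  have hgrid : ∀ S : Finset (Fin d),
      ∫⁻ ω, ENNReal.ofReal (|X (fun i => if i ∈ S then (n : ℝ) * t₀ i else t₀ i) ω| ^ α) ∂P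
        < ⊤ := by
    intro S
    induction S using Finset.induction_on with
    | empty => simpa using hmom
    | @insert j S hjS ih =>
      set q : Fin d → ℝ := fun i => if i ∈ S then (n : ℝ) * t₀ i else t₀ i with hqdef
      have hq0 : 0 ≤ q := by
        intro i
        by_cases h : i ∈ S
        · simp only [hqdef, h, if_true]
          exact mul_nonneg (Nat.cast_nonneg n) (ht₀ i).le
        · simp only [hqdef, h, if_false]
          exact (ht₀ i).le
      have hqj : q j = t₀ j := by simp [hqdef, hjS]
      have key : ∀ k : ℕ, 1 ≤ k →
          ∫⁻ ω, ENNReal.ofReal (|X (Function.update q j ((k : ℝ) * t₀ j)) ω| ^ α) ∂P < ⊤ := by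
        intro k hk
        induction k with
        | zero => omega
        | succ k ihk =>
          rcases Nat.lt_or_ge k 1 with h1 | h1
          · -- k = 0 : the point is q itself
            have hk0 : k = 0 := by omega
            subst hk0
            have : Function.update q j (((0 + 1 : ℕ) : ℝ) * t₀ j) = q := by
              rw [show (((0 + 1 : ℕ) : ℝ) * t₀ j) = q j by rw [hqj]; push_cast; ring]
              exact Function.update_eq_self j q
            rw [this]
            exact ih
          · have hb := ihk h1
            set b : Fin d → ℝ := Function.update q j ((k : ℝ) * t₀ j) with hbdef
            have hb0 : 0 ≤ b := by
              intro i
              rcases eq_or_ne i j with rfl | hij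
              · simp only [hbdef, Function.update_self]
                exact mul_nonneg (Nat.cast_nonneg k) (ht₀ i).le
              · simpa [hbdef, Function.update_of_ne hij] using hq0 i
            have hfin2 : ∫⁻ ω, ENNReal.ofReal (|X (Function.update b j (t₀ j)) ω| ^ α) ∂P < ⊤ := by
              have : Function.update b j (t₀ j) = q := by
                rw [hbdef, Function.update_idem, ← hqj]
                exact Function.update_eq_self j q
              rw [this]
              exact ih
            have hext := moment_extend hP hX hα hb0 j (ht₀ j).le hb hfin2
            have : Function.update b j (b j + t₀ j)
                = Function.update q j (((k + 1 : ℕ) : ℝ) * t₀ j) := by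
              rw [hbdef, Function.update_idem, Function.update_self]
              congr 1
              push_cast
              ring
            rwa [this] at hext
      have hfinal := key n hn1
      have heq : (fun i => if i ∈ insert j S then (n : ℝ) * t₀ i else t₀ i)
          = Function.update q j ((n : ℝ) * t₀ j) := by
        funext i
        rcases eq_or_ne i j with rfl | hij
        · simp
        · simp [hqdef, Function.update_of_ne hij, Finset.mem_insert, hij]
      rw [heq]
      exact hfinal
  -- Step 2: come down from the grid point to `t`
  have hdesc : ∀ S : Finset (Fin d),
      ∫⁻ ω, ENNReal.ofReal (|X (fun i => if i ∈ S then t i else (n : ℝ) * t₀ i) ω| ^ α) ∂P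
        < ⊤ := by
    intro S
    induction S using Finset.induction_on with
    | empty => simpa using hgrid Finset.univ
    | @insert j S hjS ih =>
      set w : Fin d → ℝ := fun i => if i ∈ S then t i else (n : ℝ) * t₀ i with hwdef
      have hw0 : 0 ≤ w := by
        intro i
        by_cases h : i ∈ S
        · simpa [hwdef, h] using ht i
        · simp only [hwdef, h, if_false]
          exact mul_nonneg (Nat.cast_nonneg n) (ht₀ i).le
      have heq : (fun i => if i ∈ insert j S then t i else (n : ℝ) * t₀ i)
          = Function.update w j (t j) := by
        funext i
        rcases eq_or_ne i j with rfl | hij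
        · simp [hwdef]
        · simp [hwdef, Function.update_of_ne hij, Finset.mem_insert, hij]
      rw [heq]
      have hmb : t j ≤ w j := by
        simp only [hwdef, hjS, if_false]
        exact hn j
      exact moment_update hP hX hα hw0 j (ht j) hmb ih
  have := hdesc Finset.univ
  simpa using this

end LevyAux

/-- Lemma 3.10: for a `d`-parameter Lévy field, if `E(|X_t|^α) < ∞` for one `t` with all
coordinates positive, then `E(|X_t|^α) < ∞` for all `t ∈ ℝ₊^d`. -/
theorem levyField_moment_time_independent
    {Ω : Type*} [MeasurableSpace Ω] (P : Measure Ω) [IsProbabilityMeasure P]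
    {d : ℕ} (hd : 0 < d) (X : (Fin d → ℝ) → Ω → ℝ) (hX : IsLevyField P X)
    (α : ℝ) (hα : 0 < α) (t₀ : Fin d → ℝ) (ht₀ : ∀ i, 0 < t₀ i)
    (hmom : ∫⁻ ω, ENNReal.ofReal (|X t₀ ω| ^ α) ∂P < ⊤) :
    ∀ t : Fin d → ℝ, 0 ≤ t → ∫⁻ ω, ENNReal.ofReal (|X t ω| ^ α) ∂P < ⊤ :=
  levyField_moment_time_independent' inferInstance hd X hX α hα t₀ ht₀ hmom
end
end

section
/- Let d ≥ 1 and let r > d be an integer. Let φ : ℝ₊^d → ℝ be a measurable function such that |φ(t)| ≤ C/(1 + |t|^r) for all t ∈ ℝ₊^d, for some constant C > 1. Then there exists a finite constant C′ (depending only on C, r and d) such that for every x ∈ ℝ with |x| > 1, ∫_{ℝ₊^d} (|x φ(t)| ∧ 1) dt ≤ C′ |x|^{d/r}. -/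
open MeasureTheory
open scoped ENNReal

noncomputable section

/-- The inequality `∫_{ℝ₊^d} (|x φ(t)| ∧ 1) dt ≤ C' |x|^{d/r}` for `|x| > 1`, when
`|φ(t)| ≤ C/(1+|t|^r)` with `r > d`. -/
theorem truncated_integral_bound {d : ℕ} (hd : 0 < d) (r : ℕ) (hr : d < r)
    (C : ℝ) (hC : 1 < C) (φ : (Fin d → ℝ) → ℝ) (hmeas : Measurable φ)
    (hbound : ∀ t : Fin d → ℝ, 0 ≤ t →
      |φ t| ≤ C / (1 + Real.sqrt (∑ i, t i ^ 2) ^ r)) :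
    ∃ C' : ℝ, ∀ x : ℝ, 1 < |x| →
      ∫⁻ t in {t : Fin d → ℝ | 0 ≤ t}, ENNReal.ofReal (min |x * φ t| 1)
        ≤ ENNReal.ofReal (C' * |x| ^ ((d : ℝ) / r)) := by
  have hr0 : 0 < r := lt_of_le_of_lt (Nat.zero_le d) hr
  have hrR : (0:ℝ) < r := by exact_mod_cast hr0
  have hC0 : (0:ℝ) < C := lt_trans one_pos hC
  set q : ℝ := 2 ^ d / 2 ^ r with hqdef
  have hq0 : 0 < q := by positivity
  have hq1 : q < 1 := by
    rw [hqdef, div_lt_one (by positivity)]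
    exact pow_lt_pow_right₀ one_lt_two hr
  have hqlt : ENNReal.ofReal q < 1 := ENNReal.ofReal_lt_one.2 hq1
  set M : ℝ≥0∞ := (ENNReal.ofReal ((2:ℝ) ^ d) +
      ENNReal.ofReal ((4:ℝ) ^ d) * (1 - ENNReal.ofReal q)⁻¹) *
      ENNReal.ofReal (C ^ ((d:ℝ) / r)) with hMdef
  have hMne : M ≠ ⊤ := by
    refine ENNReal.mul_ne_top (ENNReal.add_ne_top.2 ⟨ENNReal.ofReal_ne_top, ?_⟩)
      ENNReal.ofReal_ne_top
    exact ENNReal.mul_ne_top ENNReal.ofReal_ne_top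
      (ENNReal.inv_ne_top.2 (tsub_pos_of_lt hqlt).ne')
  refine ⟨M.toReal, ?_⟩
  intro x hx
  have hx0 : (0:ℝ) < |x| := lt_trans one_pos hx
  set a : ℝ := C * |x| with hadef
  have ha1 : 1 < a := by nlinarith
  have ha0 : 0 < a := lt_trans one_pos ha1
  set R : ℝ := a ^ ((1:ℝ)/r) with hRdef
  have hR1 : 1 < R := (Real.one_lt_rpow_iff_of_pos ha0).2 (Or.inl ⟨ha1, by positivity⟩)
  have hR0 : 0 < R := lt_trans one_pos hR1
  have hRr : R ^ r = a := by
    rw [hRdef, ← Real.rpow_natCast (a ^ ((1:ℝ)/r)) r, ← Real.rpow_mul ha0.le,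
      one_div_mul_cancel (ne_of_gt hrR), Real.rpow_one]
  set g : (Fin d → ℝ) → ℝ≥0∞ :=
    fun t => min (ENNReal.ofReal a / ENNReal.ofReal ‖t‖ ^ r) 1 with hgdef
  -- the sup norm is bounded by the Euclidean norm
  have hnorm_le : ∀ t : Fin d → ℝ, ‖t‖ ≤ Real.sqrt (∑ i, t i ^ 2) := by
    intro t
    rw [pi_norm_le_iff_of_nonneg (Real.sqrt_nonneg _)]
    intro i
    rw [Real.norm_eq_abs, ← Real.sqrt_sq_eq_abs]
    exact Real.sqrt_le_sqrt
      (Finset.single_le_sum (fun j _ => sq_nonneg (t j)) (Finset.mem_univ i))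
  -- pointwise bound on the nonnegative orthant
  have hpt : ∀ t ∈ {t : Fin d → ℝ | 0 ≤ t},
      ENNReal.ofReal (min |x * φ t| 1) ≤ g t := by
    intro t ht
    refine le_min ?_ ?_
    case refine_2 =>
      calc ENNReal.ofReal (min |x * φ t| 1)
          ≤ ENNReal.ofReal 1 := ENNReal.ofReal_le_ofReal (min_le_right _ _)
        _ = 1 := ENNReal.ofReal_one
    · rcases eq_or_lt_of_le (norm_nonneg t) with h0 | h0
      · have hz : ENNReal.ofReal ‖t‖ ^ r = 0 := by
          rw [← h0]; simp [hr0.ne']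
        rw [hz, ENNReal.div_zero (by simp [ENNReal.ofReal_eq_zero, not_le, ha0])]
        exact le_top
      · have hpow : (0:ℝ) < ‖t‖ ^ r := pow_pos h0 r
        have h1 : |φ t| ≤ C / ‖t‖ ^ r := by
          refine (hbound t ht).trans ?_
          have h2 : ‖t‖ ^ r ≤ 1 + Real.sqrt (∑ i, t i ^ 2) ^ r := by
            have := pow_le_pow_left₀ (norm_nonneg t) (hnorm_le t) r
            linarith
          exact div_le_div_of_nonneg_left hC0.le hpow h2
        have hφ : |x * φ t| ≤ a / ‖t‖ ^ r := by
          rw [abs_mul]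
          calc |x| * |φ t| ≤ |x| * (C / ‖t‖ ^ r) :=
                mul_le_mul_of_nonneg_left h1 (abs_nonneg x)
            _ = a / ‖t‖ ^ r := by rw [hadef]; ring
        calc ENNReal.ofReal (min |x * φ t| 1)
            ≤ ENNReal.ofReal (a / ‖t‖ ^ r) :=
              ENNReal.ofReal_le_ofReal ((min_le_left _ _).trans hφ)
          _ = ENNReal.ofReal a / ENNReal.ofReal (‖t‖ ^ r) :=
              ENNReal.ofReal_div_of_pos hpow
          _ = ENNReal.ofReal a / ENNReal.ofReal ‖t‖ ^ r := by
              rw [ENNReal.ofReal_pow (norm_nonneg t)]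
  have hsmeas : MeasurableSet {t : Fin d → ℝ | 0 ≤ t} := by
    have hset : {t : Fin d → ℝ | 0 ≤ t} = ⋂ i, {t : Fin d → ℝ | 0 ≤ t i} := by
      ext t; simp [Pi.le_def]
    rw [hset]
    exact MeasurableSet.iInter fun i =>
      measurableSet_le measurable_const (measurable_pi_apply i)
  set B : Set (Fin d → ℝ) := Metric.ball 0 R with hBdef
  set A : ℕ → Set (Fin d → ℝ) :=
    fun k => Metric.ball 0 (2 ^ (k+1) * R) \ Metric.ball 0 (2 ^ k * R) with hAdef
  have hcover : {t : Fin d → ℝ | 0 ≤ t} ⊆ B ∪ ⋃ k, A k := by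
    intro t _
    by_cases hB : t ∈ B
    · exact Or.inl hB
    · right
      have htR : R ≤ ‖t‖ := by
        simpa [hBdef, Metric.mem_ball, dist_zero_right, not_lt] using hB
      have hu : 1 ≤ ‖t‖ / R := (one_le_div hR0).2 htR
      obtain ⟨k, hk1, hk2⟩ := exists_nat_pow_near hu one_lt_two
      refine Set.mem_iUnion.2 ⟨k, ?_, ?_⟩
      · rw [Metric.mem_ball, dist_zero_right]
        calc ‖t‖ = ‖t‖ / R * R := by field_simp
          _ < 2 ^ (k+1) * R := mul_lt_mul_of_pos_right hk2 hR0
      · rw [Metric.mem_ball, dist_zero_right, not_lt]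
        calc (2:ℝ) ^ k * R ≤ ‖t‖ / R * R := mul_le_mul_of_nonneg_right hk1 hR0.le
          _ = ‖t‖ := by field_simp
  -- bound on each annulus
  have hAk : ∀ k : ℕ, ∫⁻ t in A k, g t ≤
      ENNReal.ofReal ((4:ℝ) ^ d * R ^ d * q ^ k) := by
    intro k
    have h2k : (0:ℝ) < 2 ^ k * R := by positivity
    have hAmeas : MeasurableSet (A k) :=
      measurableSet_ball.diff measurableSet_ball
    have hgA : ∀ t ∈ A k, g t ≤ ENNReal.ofReal (a / (2 ^ k * R) ^ r) := by
      intro t ht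
      have htlb : 2 ^ k * R ≤ ‖t‖ := by
        have := ht.2
        simpa [Metric.mem_ball, dist_zero_right, not_lt] using this
      calc g t ≤ ENNReal.ofReal a / ENNReal.ofReal ‖t‖ ^ r := min_le_left _ _
        _ ≤ ENNReal.ofReal a / ENNReal.ofReal (2 ^ k * R) ^ r := by
            gcongr
        _ = ENNReal.ofReal (a / (2 ^ k * R) ^ r) := by
            rw [← ENNReal.ofReal_pow h2k.le, ← ENNReal.ofReal_div_of_pos (pow_pos h2k r)]
    calc ∫⁻ t in A k, g t
        ≤ ∫⁻ _ in A k, ENNReal.ofReal (a / (2 ^ k * R) ^ r) :=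
          setLIntegral_mono' hAmeas hgA
      _ = ENNReal.ofReal (a / (2 ^ k * R) ^ r) * volume (A k) :=
          setLIntegral_const _ _
      _ ≤ ENNReal.ofReal (a / (2 ^ k * R) ^ r) *
          volume (Metric.ball (0 : Fin d → ℝ) (2 ^ (k+1) * R)) := by
          gcongr
          exact Set.diff_subset
      _ = ENNReal.ofReal (a / (2 ^ k * R) ^ r) *
          ENNReal.ofReal ((2 * (2 ^ (k+1) * R)) ^ d) := by
          rw [Real.volume_pi_ball _ (by positivity)]
          simp [Fintype.card_fin]
      _ = ENNReal.ofReal (a / (2 ^ k * R) ^ r * (2 * (2 ^ (k+1) * R)) ^ d) :=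
          (ENNReal.ofReal_mul (by positivity)).symm
      _ = ENNReal.ofReal ((4:ℝ) ^ d * R ^ d * q ^ k) := by
          congr 1
          rw [← hRr, hqdef]
          rw [div_pow, ← pow_mul, ← pow_mul]
          field_simp
          ring
  -- sum of the annulus bounds
  have hsum : ∑' k : ℕ, ENNReal.ofReal ((4:ℝ) ^ d * R ^ d * q ^ k) =
      ENNReal.ofReal ((4:ℝ) ^ d * R ^ d) * (1 - ENNReal.ofReal q)⁻¹ := by
    have hterm : ∀ k : ℕ, ENNReal.ofReal ((4:ℝ) ^ d * R ^ d * q ^ k) =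
        ENNReal.ofReal ((4:ℝ) ^ d * R ^ d) * ENNReal.ofReal q ^ k := by
      intro k
      rw [ENNReal.ofReal_mul (by positivity), ENNReal.ofReal_pow hq0.le]
    simp_rw [hterm]
    rw [ENNReal.tsum_mul_left, ENNReal.tsum_geometric]
  -- rewrite R^d
  have hRd : R ^ d = C ^ ((d:ℝ)/r) * |x| ^ ((d:ℝ)/r) := by
    rw [hRdef, ← Real.rpow_natCast (a ^ ((1:ℝ)/r)) d, ← Real.rpow_mul ha0.le]
    have hexp : (1:ℝ)/r * d = (d:ℝ)/r := by ring
    rw [hexp, hadef, Real.mul_rpow hC0.le (abs_nonneg x)]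
  calc ∫⁻ t in {t : Fin d → ℝ | 0 ≤ t}, ENNReal.ofReal (min |x * φ t| 1)
      ≤ ∫⁻ t in {t : Fin d → ℝ | 0 ≤ t}, g t := setLIntegral_mono' hsmeas hpt
    _ ≤ ∫⁻ t in B ∪ ⋃ k, A k, g t :=
        lintegral_mono' (Measure.restrict_mono hcover le_rfl) le_rfl
    _ ≤ (∫⁻ t in B, g t) + ∫⁻ t in ⋃ k, A k, g t := lintegral_union_le _ _ _
    _ ≤ (∫⁻ t in B, g t) + ∑' k : ℕ, ∫⁻ t in A k, g t := by
        gcongr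
        exact lintegral_iUnion_le _ _
    _ ≤ ENNReal.ofReal ((2 * R) ^ d) +
        ∑' k : ℕ, ENNReal.ofReal ((4:ℝ) ^ d * R ^ d * q ^ k) := by
        gcongr with k
        · calc ∫⁻ t in B, g t ≤ ∫⁻ _ in B, (1:ℝ≥0∞) :=
                setLIntegral_mono' measurableSet_ball (fun t _ => min_le_right _ _)
            _ = volume B := by simp
            _ = ENNReal.ofReal ((2 * R) ^ d) := by
                rw [hBdef, Real.volume_pi_ball _ hR0]
                simp [Fintype.card_fin]
        · exact hAk k
    _ = ENNReal.ofReal ((2 * R) ^ d) +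
        ENNReal.ofReal ((4:ℝ) ^ d * R ^ d) * (1 - ENNReal.ofReal q)⁻¹ := by
        rw [hsum]
    _ = (ENNReal.ofReal ((2:ℝ) ^ d) +
        ENNReal.ofReal ((4:ℝ) ^ d) * (1 - ENNReal.ofReal q)⁻¹) *
        ENNReal.ofReal (R ^ d) := by
        rw [mul_pow, ENNReal.ofReal_mul (by positivity),
          ENNReal.ofReal_mul (by positivity), add_mul]
        ring
    _ = M * ENNReal.ofReal (|x| ^ ((d:ℝ)/r)) := by
        rw [hRd, ENNReal.ofReal_mul (by positivity), hMdef]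
        ring
    _ = ENNReal.ofReal (M.toReal * |x| ^ ((d:ℝ)/r)) := by
        rw [ENNReal.ofReal_mul ENNReal.toReal_nonneg, ENNReal.ofReal_toReal hMne]
end
end
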